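/- arXiv:2107.07404 — 14 statements merged into one kernel-verified Lean document; each statement's English description precedes it below -/
import Mathlib

section
/- Let n, d be coprime with 1 ≤ d < n, and a ∈ Z/nZ. For the round-robin matching with x = n−d, i.e., M(i,j) = 1 iff i = a − (j·d + t)·d⁻¹ (mod n) for some t ∈ {0,...,d-1}, the matching is symmetric in the sense that for every k ∈ Z/nZ, the set of right-agents matched to left-agent k equals the set of left-agents matched to right-agent k. -/
/-- For coprime n, d with 1 ≤ d < n and a ∈ ℤ/nℤ, the round-robin matching with
parameter x = n − d, given by M(i,j) = 1 iff i = a − (j·d + t)·d⁻¹ for some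
t ∈ {0,…,d-1}, is symmetric: for every k, the set of right agents matched to
left agent k equals the set of left agents matched to right agent k. -/
theorem stmt_2 (n d : ℕ) (hn : 2 ≤ n) (hd1 : 1 ≤ d) (hdn : d < n)
    (hgcd : Nat.gcd n d = 1) (a : ZMod n) :
    ∀ k : ZMod n,
      {j : ZMod n | ∃ t < d,
        k = a - (j * (d : ZMod n) + (t : ZMod n)) * (d : ZMod n)⁻¹}
      = {i : ZMod n | ∃ t < d,
        i = a - (k * (d : ZMod n) + (t : ZMod n)) * (d : ZMod n)⁻¹} := by
  have : NeZero n := ⟨by omega⟩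
  have hu : IsUnit (d : ZMod n) := by
    rw [ZMod.isUnit_iff_coprime]
    exact Nat.coprime_comm.mp hgcd
  set e := (d : ZMod n)⁻¹ with he
  have h1 : (d : ZMod n) * e = 1 := ZMod.mul_inv_of_unit _ hu
  have key : ∀ i j : ZMod n, ∀ t : ℕ,
      (i = a - (j * (d : ZMod n) + (t : ZMod n)) * e) ↔
      (j = a - (i * (d : ZMod n) + (t : ZMod n)) * e) := by
    have main : ∀ i j : ZMod n, ∀ t : ℕ,
        (i = a - (j * (d : ZMod n) + (t : ZMod n)) * e) →
        (j = a - (i * (d : ZMod n) + (t : ZMod n)) * e) := by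
      intro i j t h
      subst h
      linear_combination (a - (t : ZMod n) * e - j * ((d : ZMod n) * e + 1)) * h1
    exact fun i j t => ⟨main i j t, main j i t⟩
  intro k
  ext j
  simp only [Set.mem_setOf_eq]
  exact exists_congr fun t => and_congr_right fun _ => key k j t
end

section
/- Let n, d be coprime with 1 ≤ d < n, and a ∈ Z/nZ. For the round-robin matching with x = d, i.e., M(i,j) = 1 iff i = a + (j·d + t)·d⁻¹ (mod n) for some t ∈ {0,...,d-1}, for every right-agent j ∈ Z/nZ there exists a left-agent i ∈ Z/nZ such that M_j^r = M_i^ℓ; specifically i = j + 2a + 1 − d⁻¹ (mod n). -/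
/-- For coprime n, d with 1 ≤ d < n and a ∈ ℤ/nℤ, in the round-robin matching with
parameter x = d, given by M(i,j) = 1 iff i = a + (j·d + t)·d⁻¹ for some t ∈ {0,…,d-1},
for every right agent j there is a left agent i, namely i = j + 2a + 1 − d⁻¹, whose set
of matches M_i^ℓ equals j's set of matches M_j^r. -/
theorem stmt_3 (n d : ℕ) (hn : 2 ≤ n) (hd1 : 1 ≤ d) (hdn : d < n)
    (hgcd : Nat.gcd n d = 1) (a : ZMod n) :
    ∀ j : ZMod n,
      {i : ZMod n | ∃ t < d,
        i = a + (j * (d : ZMod n) + (t : ZMod n)) * (d : ZMod n)⁻¹}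
      = {j' : ZMod n | ∃ t < d,
        j + 2 * a + 1 - (d : ZMod n)⁻¹
          = a + (j' * (d : ZMod n) + (t : ZMod n)) * (d : ZMod n)⁻¹} := by
  intro j
  have hco : Nat.Coprime d n := Nat.coprime_comm.mp hgcd
  have hdu : (d : ZMod n) * (d : ZMod n)⁻¹ = 1 := ZMod.coe_mul_inv_eq_one d hco
  ext i
  simp only [Set.mem_setOf_eq]
  constructor
  · rintro ⟨t, ht, rfl⟩
    refine ⟨d - 1 - t, by omega, ?_⟩
    have hcast : ((d - 1 - t : ℕ) : ZMod n) = (d : ZMod n) - 1 - (t : ZMod n) := by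
      have h1 : t ≤ d - 1 := by omega
      have h2 : 1 ≤ d := hd1
      push_cast [Nat.cast_sub h1, Nat.cast_sub h2]
      ring
    rw [hcast]
    linear_combination (-(a + j * ((d : ZMod n) * (d : ZMod n)⁻¹ + 1)
      + (t : ZMod n) * (d : ZMod n)⁻¹ + 1)) * hdu
  · rintro ⟨t, ht, h⟩
    refine ⟨d - 1 - t, by omega, ?_⟩
    have hcast : ((d - 1 - t : ℕ) : ZMod n) = (d : ZMod n) - 1 - (t : ZMod n) := by
      have h1 : t ≤ d - 1 := by omega
      have h2 : 1 ≤ d := hd1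
      push_cast [Nat.cast_sub h1, Nat.cast_sub h2]
      ring
    rw [hcast]
    linear_combination -h - (i + j + 1) * hdu
end

section
/- There is no complete SD-DEF1 matching in the following instance: n^ℓ = n^r = 4d with d ≥ 3, all degree constraints equal d, all left-agents have the common ranking 0 ≻ 1 ≻ ... ≻ 4d−1 over right-agents, the right-agents are partitioned into blocks B_m = {4m,...,4m+3} for m ∈ {0,...,d−1}, every right-agent in B_0 has ranking beginning 0 ≻ 1 ≻ 2 ≻ 3, every right-agent in B_1 has ranking beginning 0 ≻ 1 ≻ 4 ≻ 5, every right-agent in B_2 has ranking beginning 2 ≻ 3 ≻ 4 ≻ 5 (remaining agents in arbitrary order), and rankings of blocks B_3,...,B_{d−1} are arbitrary. -/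
open Finset

/-- Impossibility of complete SD-DEF1 matchings.  There are n^ℓ = n^r = 4d agents on
each side (d ≥ 3), all with degree constraint d.  All left agents share the ranking
0 ≻ 1 ≻ … ≻ 4d−1 over right agents.  Right agent j's ranking is given by the bijection
σ j of {0,…,4d−1} (position ↦ left agent): agents in block B₀ = {0,…,3} rank
0 ≻ 1 ≻ 2 ≻ 3 first, agents in B₁ = {4,…,7} rank 0 ≻ 1 ≻ 4 ≻ 5 first, agents in
B₂ = {8,…,11} rank 2 ≻ 3 ≻ 4 ≻ 5 first; all other rankings are arbitrary.  Then no
complete matching (all degrees exactly d) is SD-DEF1 (SD-EF1 over both sides). -/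
theorem stmt_6 (d : ℕ) (hd : 3 ≤ d)
    (σ : ℕ → ℕ → ℕ)
    (hσ : ∀ j < 4 * d, Set.BijOn (σ j) (Set.Iio (4 * d)) (Set.Iio (4 * d)))
    (hB0 : ∀ j < 4, σ j 0 = 0 ∧ σ j 1 = 1 ∧ σ j 2 = 2 ∧ σ j 3 = 3)
    (hB1 : ∀ j, 4 ≤ j → j < 8 → σ j 0 = 0 ∧ σ j 1 = 1 ∧ σ j 2 = 4 ∧ σ j 3 = 5)
    (hB2 : ∀ j, 8 ≤ j → j < 12 → σ j 0 = 2 ∧ σ j 1 = 3 ∧ σ j 2 = 4 ∧ σ j 3 = 5) :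
    ¬ ∃ M : ℕ → ℕ → Bool,
      (∀ i < 4 * d, ((Finset.range (4 * d)).filter (fun j => M i j)).card = d) ∧
      (∀ j < 4 * d, ((Finset.range (4 * d)).filter (fun i => M i j)).card = d) ∧
      (∀ i < 4 * d, ∀ i' < 4 * d, ∀ t ≤ 4 * d,
        ((Finset.range t).filter (fun j => M i' j)).card
          ≤ ((Finset.range t).filter (fun j => M i j)).card + 1) ∧
      (∀ j < 4 * d, ∀ j' < 4 * d, ∀ t ≤ 4 * d,
        ((Finset.range t).filter (fun p => M (σ j p) j')).card
          ≤ ((Finset.range t).filter (fun p => M (σ j p) j)).card + 1) := by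
  rintro ⟨M, hrow, hcol, hL, hR⟩
  -- Step 1: double counting of the first t columns
  have hsum : ∀ t, t ≤ 4 * d →
      ∑ i ∈ range (4 * d), ((range t).filter (fun j => M i j)).card = t * d := by
    intro t ht
    calc ∑ i ∈ range (4 * d), ((range t).filter (fun j => M i j)).card
        = ∑ i ∈ range (4 * d), ∑ j ∈ range t, (if M i j then 1 else 0) :=
          Finset.sum_congr rfl fun i _ => Finset.card_filter _ _
      _ = ∑ j ∈ range t, ∑ i ∈ range (4 * d), (if M i j then 1 else 0) := Finset.sum_comm
      _ = ∑ j ∈ range t, d := by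
          refine Finset.sum_congr rfl fun j hj => ?_
          rw [← Finset.card_filter]
          exact hcol j (lt_of_lt_of_le (mem_range.mp hj) ht)
      _ = t * d := by simp [Finset.sum_const, mul_comm]
  -- Step 2: every row has exactly k entries among the first 4k columns
  have hpref : ∀ k, k ≤ d → ∀ i, i < 4 * d →
      ((range (4 * k)).filter (fun j => M i j)).card = k := by
    intro k hk i hi
    by_contra hne
    have hS := hsum (4 * k) (by omega)
    rcases Nat.lt_or_ge (((range (4 * k)).filter (fun j => M i j)).card) k with hlt | hge
    · have hub : ∀ i' ∈ range (4 * d),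
          ((range (4 * k)).filter (fun j => M i' j)).card ≤ k := by
        intro i' hi'
        have := hL i hi i' (mem_range.mp hi') (4 * k) (by omega)
        omega
      have hlt2 := Finset.sum_lt_sum hub ⟨i, mem_range.mpr hi, by omega⟩
      rw [hS] at hlt2
      simp only [Finset.sum_const, Finset.card_range, smul_eq_mul] at hlt2
      have he : 4 * k * d = 4 * d * k := by ring
      omega
    · have hgt : k < ((range (4 * k)).filter (fun j => M i j)).card := by omega
      have hlb : ∀ i' ∈ range (4 * d),
          k ≤ ((range (4 * k)).filter (fun j => M i' j)).card := by
        intro i' hi'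
        have := hL i' (mem_range.mp hi') i hi (4 * k) (by omega)
        omega
      have hlt2 := Finset.sum_lt_sum hlb ⟨i, mem_range.mpr hi, hgt⟩
      rw [hS] at hlt2
      simp only [Finset.sum_const, Finset.card_range, smul_eq_mul] at hlt2
      have he : 4 * k * d = 4 * d * k := by ring
      omega
  -- Step 3: every row has exactly one entry in each block of 4 columns
  have hblock : ∀ m, m + 1 ≤ d → ∀ i, i < 4 * d →
      ((Finset.Ico (4 * m) (4 * m + 4)).filter (fun j => M i j)).card = 1 := by
    intro m hm i hi
    have h1 := hpref m (by omega) i hi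
    have h2 := hpref (m + 1) (by omega) i hi
    have he : (4 : ℕ) * (m + 1) = 4 * m + 4 := by ring
    rw [he] at h2
    have hu : range (4 * m + 4) = range (4 * m) ∪ Finset.Ico (4 * m) (4 * m + 4) := by
      simp only [range_eq_Ico]
      rw [Finset.Ico_union_Ico_eq_Ico (Nat.zero_le _) (by omega)]
    have hdisj : Disjoint ((range (4 * m)).filter (fun j => M i j))
        ((Finset.Ico (4 * m) (4 * m + 4)).filter (fun j => M i j)) := by
      simp only [Finset.disjoint_left, Finset.mem_filter, Finset.mem_range, Finset.mem_Ico]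
      rintro a ⟨ha, -⟩ ⟨⟨ha', -⟩, -⟩
      omega
    rw [hu, Finset.filter_union, Finset.card_union_of_disjoint hdisj, h1] at h2
    omega
  have hbsum : ∀ m, m + 1 ≤ d → ∀ i, i < 4 * d →
      ∑ j ∈ Finset.Ico (4 * m) (4 * m + 4), (if M i j then 1 else 0) = 1 := by
    intro m hm i hi
    rw [← Finset.card_filter]
    exact hblock m hm i hi
  -- EF1 over the right side, in summation form
  have ef1 : ∀ j, j < 4 * d → ∀ j', j' < 4 * d → ∀ t, t ≤ 4 * d →
      (∑ p ∈ range t, if M (σ j p) j' then 1 else 0)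
        ≤ (∑ p ∈ range t, if M (σ j p) j then 1 else 0) + 1 := by
    intro j hj j' hj' t ht
    have h := hR j hj j' hj' t ht
    rw [Finset.card_filter, Finset.card_filter] at h
    exact h
  -- Pigeonhole: in each block there is a column avoiding three given rows
  have pigeon : ∀ (a b c : ℕ) (m : ℕ), m + 1 ≤ d → a < 4 * d → b < 4 * d → c < 4 * d →
      ∃ j ∈ Finset.Ico (4 * m) (4 * m + 4),
        M a j = false ∧ M b j = false ∧ M c j = false := by
    intro a b c m hm ha hb hc
    set B := Finset.Ico (4 * m) (4 * m + 4) with hB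
    have hU : ((B.filter (fun j => M a j)) ∪ (B.filter (fun j => M b j))
        ∪ (B.filter (fun j => M c j))).card ≤ 3 := by
      calc ((B.filter (fun j => M a j)) ∪ (B.filter (fun j => M b j))
            ∪ (B.filter (fun j => M c j))).card
          ≤ ((B.filter (fun j => M a j)) ∪ (B.filter (fun j => M b j))).card
            + (B.filter (fun j => M c j)).card := Finset.card_union_le _ _
        _ ≤ (B.filter (fun j => M a j)).card + (B.filter (fun j => M b j)).card
            + (B.filter (fun j => M c j)).card := by
            have := Finset.card_union_le (B.filter (fun j => M a j))
              (B.filter (fun j => M b j))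
            omega
        _ ≤ 3 := by
            rw [hblock m hm a ha, hblock m hm b hb, hblock m hm c hc]
    have hcard : B.card = 4 := by
      rw [hB, Nat.card_Ico]; omega
    by_contra hcon
    push_neg at hcon
    have hsub : B ⊆ ((B.filter (fun j => M a j)) ∪ (B.filter (fun j => M b j))
        ∪ (B.filter (fun j => M c j))) := by
      intro j hj
      simp only [Finset.mem_union, Finset.mem_filter]
      have hthis := hcon j hj
      cases ha' : M a j
      · cases hb' : M b j
        · cases hc' : M c j
          · exact absurd hc' (hthis ha' hb')
          · exact Or.inr ⟨hj, rfl⟩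
        · exact Or.inl (Or.inr ⟨hj, rfl⟩)
      · exact Or.inl (Or.inl ⟨hj, rfl⟩)
    have hle := Finset.card_le_card hsub
    omega
  -- Apply pigeonhole in block B1 with rows 0,1,4
  obtain ⟨j1, hj1mem, hj1a, hj1b, hj1c⟩ :=
    pigeon 0 1 4 1 (by omega) (by omega) (by omega) (by omega)
  have hj1r : 4 ≤ j1 ∧ j1 < 8 := by
    have := Finset.mem_Ico.mp hj1mem; omega
  obtain ⟨e10, e11, e12, -⟩ := hB1 j1 hj1r.1 hj1r.2
  have key1 : ∀ j', j' < 4 * d →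
      (if M 0 j' then 1 else 0) + (if M 1 j' then 1 else 0)
        + (if M 4 j' then (1:ℕ) else 0) ≤ 1 := by
    intro j' hj'
    have h := ef1 j1 (by omega) j' hj' 3 (by omega)
    simp only [Finset.sum_range_succ, Finset.sum_range_zero] at h
    rw [e10, e11, e12] at h
    have v0 : (if M 0 j1 then (1:ℕ) else 0) = 0 := by rw [hj1a]; simp
    have v1 : (if M 1 j1 then (1:ℕ) else 0) = 0 := by rw [hj1b]; simp
    have v2 : (if M 4 j1 then (1:ℕ) else 0) = 0 := by rw [hj1c]; simp
    omega
  -- Apply pigeonhole in block B2 with rows 2,3,4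
  obtain ⟨j2, hj2mem, hj2a, hj2b, hj2c⟩ :=
    pigeon 2 3 4 2 (by omega) (by omega) (by omega) (by omega)
  have hj2r : 8 ≤ j2 ∧ j2 < 12 := by
    have := Finset.mem_Ico.mp hj2mem; omega
  obtain ⟨e20, e21, e22, -⟩ := hB2 j2 hj2r.1 hj2r.2
  have key2 : ∀ j', j' < 4 * d →
      (if M 2 j' then 1 else 0) + (if M 3 j' then 1 else 0)
        + (if M 4 j' then (1:ℕ) else 0) ≤ 1 := by
    intro j' hj'
    have h := ef1 j2 (by omega) j' hj' 3 (by omega)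
    simp only [Finset.sum_range_succ, Finset.sum_range_zero] at h
    rw [e20, e21, e22] at h
    have v0 : (if M 2 j2 then (1:ℕ) else 0) = 0 := by rw [hj2a]; simp
    have v1 : (if M 3 j2 then (1:ℕ) else 0) = 0 := by rw [hj2b]; simp
    have v2 : (if M 4 j2 then (1:ℕ) else 0) = 0 := by rw [hj2c]; simp
    omega
  -- There is a column j3 of block B0 matched to row 4
  have hne : ((Finset.Ico (4 * 0) (4 * 0 + 4)).filter (fun j => M 4 j)).Nonempty := by
    rw [← Finset.card_pos, hblock 0 (by omega) 4 (by omega)]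
    omega
  obtain ⟨j3, hj3f⟩ := hne
  have hj3mem : j3 ∈ Finset.Ico (4 * 0) (4 * 0 + 4) := (Finset.mem_filter.mp hj3f).1
  have hj3 : M 4 j3 = true := (Finset.mem_filter.mp hj3f).2
  have hj3r : j3 < 4 := by
    have := Finset.mem_Ico.mp hj3mem; omega
  -- j3 is matched to none of rows 0,1,2,3
  have w4 : (if M 4 j3 then (1:ℕ) else 0) = 1 := by rw [hj3]; simp
  have hM0 : M 0 j3 = false := by
    cases h0 : M 0 j3
    · rfl
    · exfalso
      have w0 : (if M 0 j3 then (1:ℕ) else 0) = 1 := by rw [h0]; simp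
      have hb := key1 j3 (by omega)
      omega
  have hM1 : M 1 j3 = false := by
    cases h0 : M 1 j3
    · rfl
    · exfalso
      have w0 : (if M 1 j3 then (1:ℕ) else 0) = 1 := by rw [h0]; simp
      have hb := key1 j3 (by omega)
      omega
  have hM2 : M 2 j3 = false := by
    cases h0 : M 2 j3
    · rfl
    · exfalso
      have w0 : (if M 2 j3 then (1:ℕ) else 0) = 1 := by rw [h0]; simp
      have hb := key2 j3 (by omega)
      omega
  have hM3 : M 3 j3 = false := by
    cases h0 : M 3 j3
    · rfl
    · exfalso
      have w0 : (if M 3 j3 then (1:ℕ) else 0) = 1 := by rw [h0]; simp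
      have hb := key2 j3 (by omega)
      omega
  -- j3's envy constraint at t = 4 bounds every column's edges into rows {0,1,2,3}
  obtain ⟨f0, f1, f2, f3⟩ := hB0 j3 hj3r
  have bnd : ∀ j', j' < 4 * d →
      (if M 0 j' then 1 else 0) + (if M 1 j' then 1 else 0)
        + (if M 2 j' then 1 else 0) + (if M 3 j' then (1:ℕ) else 0) ≤ 1 := by
    intro j' hj'
    have h := ef1 j3 (by omega) j' hj' 4 (by omega)
    simp only [Finset.sum_range_succ, Finset.sum_range_zero] at h
    rw [f0, f1, f2, f3] at h
    have v0 : (if M 0 j3 then (1:ℕ) else 0) = 0 := by rw [hM0]; simp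
    have v1 : (if M 1 j3 then (1:ℕ) else 0) = 0 := by rw [hM1]; simp
    have v2 : (if M 2 j3 then (1:ℕ) else 0) = 0 := by rw [hM2]; simp
    have v3 : (if M 3 j3 then (1:ℕ) else 0) = 0 := by rw [hM3]; simp
    omega
  -- But block B0 receives exactly 4 edges from rows {0,1,2,3}, with 0 at column j3
  set F : ℕ → ℕ := fun j => (if M 0 j then 1 else 0) + (if M 1 j then 1 else 0)
    + (if M 2 j then 1 else 0) + (if M 3 j then (1:ℕ) else 0) with hF
  have hsum4 : ∑ j ∈ Finset.Ico (4 * 0) (4 * 0 + 4), F j = 4 := by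
    rw [hF]
    rw [Finset.sum_add_distrib, Finset.sum_add_distrib, Finset.sum_add_distrib,
      hbsum 0 (by omega) 0 (by omega), hbsum 0 (by omega) 1 (by omega),
      hbsum 0 (by omega) 2 (by omega), hbsum 0 (by omega) 3 (by omega)]
  have hsplit : F j3 + ∑ j ∈ (Finset.Ico (4 * 0) (4 * 0 + 4)).erase j3, F j
      = ∑ j ∈ Finset.Ico (4 * 0) (4 * 0 + 4), F j :=
    Finset.add_sum_erase _ F hj3mem
  have hzero : F j3 = 0 := by
    rw [hF]
    simp only []
    rw [hM0, hM1, hM2, hM3]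
    simp
  have herase : ∑ j ∈ (Finset.Ico (4 * 0) (4 * 0 + 4)).erase j3, F j ≤ 3 := by
    have hcard : ((Finset.Ico (4 * 0) (4 * 0 + 4)).erase j3).card = 3 := by
      rw [Finset.card_erase_of_mem hj3mem, Nat.card_Ico]
    calc ∑ j ∈ (Finset.Ico (4 * 0) (4 * 0 + 4)).erase j3, F j
        ≤ ((Finset.Ico (4 * 0) (4 * 0 + 4)).erase j3).card • 1 := by
          refine Finset.sum_le_card_nsmul _ _ 1 fun j hj => ?_
          have hj' := Finset.mem_Ico.mp (Finset.mem_of_mem_erase hj)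
          have := bnd j (by omega)
          rw [hF]
          exact this
      _ = 3 := by rw [hcard]; simp
  omega
end

section
/- In any complete SD-DEF1 matching for the instance of the previous theorem (n = 4d agents per side, common degree d ≥ 3, left-agents with common ranking 0 ≻ ... ≻ 4d−1, right blocks B_m = {4m,...,4m+3}), every left-agent is matched to exactly one right-agent from each block B_m. -/
/-- In the instance with n = 4d agents per side (d ≥ 3), common degree d, left agents
sharing the ranking 0 ≻ … ≻ 4d−1, and right agents' rankings given by bijections σ j
(with blocks B_m = {4m,…,4m+3}), any complete SD-DEF1 matching matches every left
agent to exactly one right agent from each block B_m. -/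
theorem stmt_7 (d : ℕ) (hd : 3 ≤ d)
    (σ : ℕ → ℕ → ℕ)
    (hσ : ∀ j < 4 * d, Set.BijOn (σ j) (Set.Iio (4 * d)) (Set.Iio (4 * d)))
    (M : ℕ → ℕ → Bool)
    (hrow : ∀ i < 4 * d, ((Finset.range (4 * d)).filter (fun j => M i j)).card = d)
    (hcol : ∀ j < 4 * d, ((Finset.range (4 * d)).filter (fun i => M i j)).card = d)
    (hefl : ∀ i < 4 * d, ∀ i' < 4 * d, ∀ t ≤ 4 * d,
      ((Finset.range t).filter (fun j => M i' j)).card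
        ≤ ((Finset.range t).filter (fun j => M i j)).card + 1)
    (hefr : ∀ j < 4 * d, ∀ j' < 4 * d, ∀ t ≤ 4 * d,
      ((Finset.range t).filter (fun p => M (σ j p) j')).card
        ≤ ((Finset.range t).filter (fun p => M (σ j p) j)).card + 1) :
    ∀ i < 4 * d, ∀ m < d,
      ((Finset.Ico (4 * m) (4 * m + 4)).filter (fun j => M i j)).card = 1 := by
  have key : ∀ t ≤ d, ∀ i' < 4 * d,
      ((Finset.range (4 * t)).filter (fun j => M i' j)).card = t := by
    intro t ht i' hi'
    set f : ℕ → ℕ := fun k => ((Finset.range (4 * t)).filter (fun j => M k j)).card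
      with hf
    have hsum : ∑ k ∈ Finset.range (4 * d), f k = 4 * d * t := by
      have h1 : ∀ k, f k = ∑ j ∈ Finset.range (4 * t), if M k j then 1 else 0 := by
        intro k; rw [hf]; exact Finset.card_filter _ _
      calc ∑ k ∈ Finset.range (4 * d), f k
          = ∑ k ∈ Finset.range (4 * d), ∑ j ∈ Finset.range (4 * t),
              if M k j then 1 else 0 := Finset.sum_congr rfl fun k _ => h1 k
        _ = ∑ j ∈ Finset.range (4 * t), ∑ k ∈ Finset.range (4 * d),
              if M k j then 1 else 0 := Finset.sum_comm
        _ = ∑ j ∈ Finset.range (4 * t),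
              ((Finset.range (4 * d)).filter (fun k => M k j)).card :=
            Finset.sum_congr rfl fun j _ => (Finset.card_filter _ _).symm
        _ = ∑ j ∈ Finset.range (4 * t), d := by
            apply Finset.sum_congr rfl
            intro j hj
            exact hcol j (by have := Finset.mem_range.mp hj; omega)
        _ = 4 * d * t := by rw [Finset.sum_const, Finset.card_range]; ring
    have hbd : ∀ a < 4 * d, ∀ b < 4 * d, f b ≤ f a + 1 := by
      intro a ha b hb
      exact hefl a ha b hb (4 * t) (by omega)
    rcases lt_trichotomy (f i') t with h | h | h
    · exfalso
      have hlt : ∑ k ∈ Finset.range (4 * d), f k < ∑ k ∈ Finset.range (4 * d), t := by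
        apply Finset.sum_lt_sum
        · intro k hk
          have := hbd i' hi' k (Finset.mem_range.mp hk)
          omega
        · exact ⟨i', Finset.mem_range.mpr hi', h⟩
      rw [hsum, Finset.sum_const, Finset.card_range, smul_eq_mul] at hlt
      omega
    · exact h
    · exfalso
      have hlt : ∑ k ∈ Finset.range (4 * d), t < ∑ k ∈ Finset.range (4 * d), f k := by
        apply Finset.sum_lt_sum
        · intro k hk
          have := hbd k (Finset.mem_range.mp hk) i' hi'
          omega
        · exact ⟨i', Finset.mem_range.mpr hi', h⟩
      rw [hsum, Finset.sum_const, Finset.card_range, smul_eq_mul] at hlt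
      omega
  intro i hi m hm
  have h1 := key m (by omega) i hi
  have h2 := key (m + 1) (by omega) i hi
  have hsplit : (Finset.range (4 * (m + 1))).filter (fun j => M i j)
      = (Finset.range (4 * m)).filter (fun j => M i j)
        ∪ (Finset.Ico (4 * m) (4 * m + 4)).filter (fun j => M i j) := by
    rw [← Finset.filter_union]
    congr 1
    ext x
    simp only [Finset.mem_range, Finset.mem_union, Finset.mem_Ico]
    omega
  have hdisj : Disjoint ((Finset.range (4 * m)).filter (fun j => M i j))
      ((Finset.Ico (4 * m) (4 * m + 4)).filter (fun j => M i j)) := by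
    apply Finset.disjoint_filter_filter
    simp [Finset.disjoint_left]
    intro a ha; omega
  have := Finset.card_union_of_disjoint hdisj
  rw [← hsplit, h2, h1] at this
  omega
end

section
/- Let n ≥ 2 and d be coprime with 1 ≤ d < n. The 2n round-robin orderings R_{a,x} of Z/nZ defined by R_{a,x}(p) = a + p·x⁻¹ (mod n), for a ∈ Z/nZ and x ∈ {d, n−d}, give rise to 2n pairwise distinct complete matchings under the round-robin procedure (where left-agents pick in order R_{a,x}, cyclically over d rounds, each picking the smallest-indexed right-agent with remaining capacity d). -/
/-- Key lemma: if the "interval" {u : val u < d} in ZMod n is invariant under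
translation by c, then c = 0. -/
lemma stmt8_key (n d : ℕ) (hn : 2 ≤ n) (hd1 : 1 ≤ d) (hdn : d < n) (c : ZMod n)
    (H : ∀ u : ZMod n, u.val < d ↔ (u + c).val < d) : c = 0 := by
  haveI : NeZero n := ⟨by omega⟩
  set w : ZMod n := ((d - 1 : ℕ) : ZMod n) - c with hw
  have hwc : w + c = ((d - 1 : ℕ) : ZMod n) := by ring
  have h1 : (w + c).val < d := by
    rw [hwc, ZMod.val_cast_of_lt (by omega)]; omega
  have hwval : w.val < d := (H w).mpr h1
  have hd' : w + 1 + c = ((d : ℕ) : ZMod n) := by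
    rw [show w + 1 + c = (w + c) + 1 by ring, hwc]
    push_cast [Nat.cast_sub hd1]
    ring
  have h2 : ¬ (w + 1 + c).val < d := by
    rw [hd', ZMod.val_cast_of_lt hdn]; omega
  have h3 : ¬ (w + 1).val < d := fun h => h2 ((H (w + 1)).mp h)
  have hv1 : (1 : ZMod n).val = 1 := ZMod.val_one_eq_one_mod n ▸ Nat.mod_eq_of_lt hn
  have hadd : (w + 1).val = (w.val + 1) % n := by rw [ZMod.val_add, hv1]
  have : w.val = d - 1 := by
    rw [hadd] at h3
    rcases Nat.lt_or_ge (w.val + 1) n with h | h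
    · rw [Nat.mod_eq_of_lt h] at h3; omega
    · have := ZMod.val_lt w; omega
  have hwe : w = ((d - 1 : ℕ) : ZMod n) := by
    conv_lhs => rw [← ZMod.natCast_zmod_val w]
    rw [this]
  have : c = ((d - 1 : ℕ) : ZMod n) - w := by rw [hw]; ring
  rw [this, hwe, sub_self]

/-- For n ≥ 2 and d coprime with 1 ≤ d < n, the 2n round-robin orderings
R_{a,x}(p) = a + p·x⁻¹ (a ∈ ℤ/nℤ, x ∈ {d, n−d}) give rise to pairwise distinct complete
matchings: the matching of (a,x) matches i to j iff i = a + (j·d + t)·x⁻¹ for some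
t ∈ {0,…,d−1}, and distinct parameter pairs (a,x) yield distinct matchings. -/
theorem stmt_8 (n d : ℕ) (hn : 2 ≤ n) (hd1 : 1 ≤ d) (hdn : d < n)
    (hgcd : Nat.gcd n d = 1) :
    ∀ a a' : ZMod n, ∀ x x' : ℕ,
      (x = d ∨ x = n - d) → (x' = d ∨ x' = n - d) → (a, x) ≠ (a', x') →
      {p : ZMod n × ZMod n | ∃ t < d,
          p.1 = a + (p.2 * (d : ZMod n) + (t : ZMod n)) * (x : ZMod n)⁻¹}
        ≠ {p : ZMod n × ZMod n | ∃ t < d,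
          p.1 = a' + (p.2 * (d : ZMod n) + (t : ZMod n)) * ((x' : ℕ) : ZMod n)⁻¹} := by
  haveI : NeZero n := ⟨by omega⟩
  have he : IsUnit ((d : ℕ) : ZMod n) :=
    (ZMod.isUnit_iff_coprime d n).mpr (Nat.coprime_comm.mp hgcd)
  set e : ZMod n := ((d : ℕ) : ZMod n) with he_def
  -- cast of an allowed x
  have hcast : ∀ y : ℕ, (y = d ∨ y = n - d) → ((y : ℕ) : ZMod n) = e ∨ ((y : ℕ) : ZMod n) = -e := by
    rintro y (rfl | rfl)
    · left; rfl
    · right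
      rw [Nat.cast_sub hdn.le, ZMod.natCast_self, zero_sub]
  have hunit : ∀ y : ℕ, (y = d ∨ y = n - d) → IsUnit ((y : ℕ) : ZMod n) := by
    intro y hy
    rcases hcast y hy with h | h
    · rw [h]; exact he
    · rw [h]; exact he.neg
  -- membership characterization
  have hmem : ∀ (b : ZMod n) (ξ : ZMod n), IsUnit ξ → ∀ i j : ZMod n,
      ((∃ t < d, i = b + (j * e + (t : ZMod n)) * ξ⁻¹) ↔ ((i - b) * ξ - j * e).val < d) := by
    intro b ξ hξ i j
    constructor
    · rintro ⟨t, ht, rfl⟩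
      have : (b + (j * e + (t : ZMod n)) * ξ⁻¹ - b) * ξ - j * e = ((t : ℕ) : ZMod n) := by
        have h1 : ξ⁻¹ * ξ = 1 := ZMod.inv_mul_of_unit ξ hξ
        calc (b + (j * e + (t : ZMod n)) * ξ⁻¹ - b) * ξ - j * e
            = (j * e + (t : ZMod n)) * (ξ⁻¹ * ξ) - j * e := by ring
          _ = ((t : ℕ) : ZMod n) := by rw [h1]; ring
      rw [this, ZMod.val_cast_of_lt (by omega)]
      exact ht
    · intro hval
      refine ⟨((i - b) * ξ - j * e).val, hval, ?_⟩
      have h1 : ξ * ξ⁻¹ = 1 := ZMod.mul_inv_of_unit ξ hξ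
      have h2 : ((((i - b) * ξ - j * e).val : ℕ) : ZMod n) = (i - b) * ξ - j * e :=
        ZMod.natCast_zmod_val _
      calc i = b + ((i - b) * ξ) * ξ⁻¹ := by
              rw [mul_assoc, h1]; ring
        _ = b + (j * e + ((((i - b) * ξ - j * e).val : ℕ) : ZMod n)) * ξ⁻¹ := by
              rw [h2]; ring_nf
  intro a a' x x' hx hx' hne hset
  have hxu := hunit x hx
  have hxu' := hunit x' hx'
  set ξ : ZMod n := ((x : ℕ) : ZMod n) with hxi
  set ξ' : ZMod n := ((x' : ℕ) : ZMod n) with hxi'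
  -- translate set equality
  have h : ∀ i j : ZMod n, ((i - a) * ξ - j * e).val < d ↔ ((i - a') * ξ' - j * e).val < d := by
    intro i j
    have := Set.ext_iff.mp hset (i, j)
    simp only [Set.mem_setOf_eq] at this
    rw [← hmem a ξ hxu i j, ← hmem a' ξ' hxu' i j]
    exact this
  -- helper facts
  have hunit_cancel : ∀ (z : ZMod n) (ζ : ZMod n), IsUnit ζ → z * ζ = 0 → z = 0 := by
    intro z ζ hζ hz
    have : z * (ζ * ζ⁻¹) = 0 := by rw [← mul_assoc, hz, zero_mul]
    rwa [ZMod.mul_inv_of_unit ζ hζ, mul_one] at this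
  have hn2 : (2 : ZMod n) = 0 → n = 2 := by
    intro h2
    have : ((2 : ℕ) : ZMod n) = 0 := by push_cast; exact h2
    have h3 := (ZMod.natCast_eq_zero_iff 2 n).mp this
    have := Nat.le_of_dvd (by norm_num) h3
    omega
  -- main case analysis
  have key := stmt8_key n d hn hd1 hdn
  have hcnd : (((n - d : ℕ)) : ZMod n) = -e := by
    rw [Nat.cast_sub hdn.le, ZMod.natCast_self, zero_sub, he_def]
  have same_sign : ξ' = ξ → a = a' ∧ x = x' := by
    intro hξξ
    have H : ∀ v : ZMod n, v.val < d ↔ (v + (a - a') * ξ).val < d := by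
      intro v
      have := h (a + v * ξ⁻¹) 0
      have hiv : (a + v * ξ⁻¹ - a) * ξ = v := by
        rw [show a + v * ξ⁻¹ - a = v * ξ⁻¹ by ring, mul_assoc,
          ZMod.inv_mul_of_unit ξ hxu, mul_one]
      rw [hξξ, show a + v * ξ⁻¹ - a' = (a + v * ξ⁻¹ - a) + (a - a') by ring,
        add_mul, hiv] at this
      simpa using this
    have hc : (a - a') * ξ = 0 := key _ H
    have haa : a = a' := by
      have := hunit_cancel _ _ hxu hc
      linear_combination this
    refine ⟨haa, ?_⟩
    by_contra hxx
    have hee : e = -e := by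
      rcases hx with h1 | h1 <;> rcases hx' with h1' | h1'
      · exact absurd (h1.trans h1'.symm) hxx
      · have e1 : ξ = e := by rw [hxi, h1, he_def]
        have e2 : ξ' = -e := by rw [hxi', h1']; exact hcnd
        linear_combination e2 - e1 - hξξ
      · have e1 : ξ = -e := by rw [hxi, h1]; exact hcnd
        have e2 : ξ' = e := by rw [hxi', h1', he_def]
        linear_combination e1 - e2 + hξξ
      · exact absurd (h1.trans h1'.symm) hxx
    have h2 : (2 : ZMod n) = 0 := by
      have : (2 : ZMod n) * e = 0 := by linear_combination hee
      exact hunit_cancel _ _ he this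
    have hn2' : n = 2 := hn2 h2
    rcases hx with h1 | h1 <;> rcases hx' with h1' | h1' <;> omega
  have opp_sign : ξ' = -ξ → a = a' ∧ x = x' := by
    intro hξξ
    have H2 : ∀ v w : ZMod n, (v - w).val < d ↔ (-(v + (a - a') * ξ) - w).val < d := by
      intro v w
      have := h (a + v * ξ⁻¹) (w * e⁻¹)
      have hiv : (a + v * ξ⁻¹ - a) * ξ = v := by
        rw [show a + v * ξ⁻¹ - a = v * ξ⁻¹ by ring, mul_assoc,
          ZMod.inv_mul_of_unit ξ hxu, mul_one]
      have hje : w * e⁻¹ * e = w := by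
        rw [mul_assoc, ZMod.inv_mul_of_unit e he, mul_one]
      rw [hξξ, hje, show a + v * ξ⁻¹ - a' = (a + v * ξ⁻¹ - a) + (a - a') by ring,
        show ((a + v * ξ⁻¹ - a) + (a - a')) * -ξ
          = -((a + v * ξ⁻¹ - a) * ξ + (a - a') * ξ) by ring,
        hiv] at this
      exact this
    set c : ZMod n := (a - a') * ξ with hc_def
    have hzero : ∀ v : ZMod n, 2 * v + c = 0 := by
      intro v
      have H : ∀ u : ZMod n, u.val < d ↔ (u + -(2 * v + c)).val < d := by
        intro u
        have := H2 v (v - u)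
        rw [show v - (v - u) = u by ring,
          show -(v + c) - (v - u) = u + -(2 * v + c) by ring] at this
        exact this
      have := key _ H
      linear_combination -this
    have hc0 : c = 0 := by have h0 := hzero 0; rw [mul_zero, zero_add] at h0; exact h0
    have h2 : (2 : ZMod n) = 0 := by
      have h1 := hzero 1
      rw [hc0, add_zero, mul_one] at h1
      exact h1
    have hn2' : n = 2 := hn2 h2
    have haa : a = a' := by
      have := hunit_cancel _ _ hxu hc0
      linear_combination this
    refine ⟨haa, ?_⟩
    rcases hx with h1 | h1 <;> rcases hx' with h1' | h1' <;> omega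
  have main : a = a' ∧ x = x' := by
    rcases hcast x hx with hξe | hξe <;> rcases hcast x' hx' with hξe' | hξe' <;>
      (rw [← hxi] at hξe; rw [← hxi'] at hξe')
    · exact same_sign (hξe'.trans hξe.symm)
    · exact opp_sign (by rw [hξe', hξe])
    · exact opp_sign (by rw [hξe', hξe, neg_neg])
    · exact same_sign (hξe'.trans hξe.symm)
  exact hne (by rw [main.1, main.2])
end

section
/- Suppose n^ℓ·d^ℓ = n^r·d^r, all left-agents share a common additive utility u^ℓ over right-agents, all right-agents share a common additive utility u^r over left-agents. Then every complete matching M that is SD-DEF1 (with respect to the rankings induced by u^ℓ and u^r) satisfies u^ℓ(M_i^ℓ) ≥ (1/d^ℓ)·MMS^ℓ for every left-agent i, where MMS^ℓ = max over complete valid matchings M' of min over left-agents i' of u^ℓ(M'_{i'}). -/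
/-- Suppose n^ℓ·d^ℓ = n^r·d^r, all left agents share the additive utility u^ℓ over
right agents and all right agents share u^r over left agents, where (wlog) both
utilities are nonincreasing in the index, so the induced common rankings are
0 ≻ 1 ≻ … on each side.  If a complete matching M (left degrees d^ℓ, right degrees
d^r) is SD-DEF1 with respect to these rankings, then every left agent i receives at
least (1/d^ℓ)·MMS^ℓ: for every complete matching M' there is a left agent i' with
u^ℓ(M'_{i'}) ≤ d^ℓ · u^ℓ(M_i). -/
theorem stmt_10 (nl nr dl dr : ℕ) (hnl : 0 < nl) (hnr : 0 < nr)
    (hdl : 0 < dl) (hdr : 0 < dr) (hbal : nl * dl = nr * dr)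
    (ul ur : ℕ → ℝ)
    (hul0 : ∀ j, 0 ≤ ul j) (hur0 : ∀ i, 0 ≤ ur i)
    (hulm : ∀ j j', j ≤ j' → ul j' ≤ ul j)
    (hurm : ∀ i i', i ≤ i' → ur i' ≤ ur i)
    (M : ℕ → ℕ → Bool)
    (hrow : ∀ i < nl, ((Finset.range nr).filter (fun j => M i j)).card = dl)
    (hcol : ∀ j < nr, ((Finset.range nl).filter (fun i => M i j)).card = dr)
    (hefl : ∀ i < nl, ∀ i' < nl, ∀ t ≤ nr,
      ((Finset.range t).filter (fun j => M i' j)).card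
        ≤ ((Finset.range t).filter (fun j => M i j)).card + 1)
    (hefr : ∀ j < nr, ∀ j' < nr, ∀ t ≤ nl,
      ((Finset.range t).filter (fun i => M i j')).card
        ≤ ((Finset.range t).filter (fun i => M i j)).card + 1) :
    ∀ i < nl, ∀ M' : ℕ → ℕ → Bool,
      (∀ i' < nl, ((Finset.range nr).filter (fun j => M' i' j)).card = dl) →
      (∀ j < nr, ((Finset.range nl).filter (fun i => M' i j)).card = dr) →
      ∃ i' < nl,
        ∑ j ∈ (Finset.range nr).filter (fun j => M' i' j), ul j
          ≤ (dl : ℝ) * ∑ j ∈ (Finset.range nr).filter (fun j => M i j), ul j := by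

  intro i hi M' hrow' hcol'
  -- double counting lemma
  have key : ∀ N : ℕ → ℕ → Bool,
      (∀ j < nr, ((Finset.range nl).filter (fun i => N i j)).card = dr) →
      ∀ t ≤ nr, ∑ i' ∈ Finset.range nl,
        ((Finset.range t).filter (fun j => N i' j)).card = t * dr := by
    intro N hc t ht
    calc ∑ i' ∈ Finset.range nl, ((Finset.range t).filter (fun j => N i' j)).card
        = ∑ i' ∈ Finset.range nl, ∑ j ∈ Finset.range t, (if N i' j then 1 else 0) :=
          Finset.sum_congr rfl fun i' _ => Finset.card_filter _ _
      _ = ∑ j ∈ Finset.range t, ∑ i' ∈ Finset.range nl, (if N i' j then 1 else 0) :=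
          Finset.sum_comm
      _ = ∑ j ∈ Finset.range t, dr := by
          refine Finset.sum_congr rfl fun j hj => ?_
          rw [← Finset.card_filter]
          exact hc j (lt_of_lt_of_le (Finset.mem_range.mp hj) ht)
      _ = t * dr := by simp [mul_comm]
  set t0 := (nl - 1) / dr with ht0def
  have ht0dr : t0 * dr < nl :=
    lt_of_le_of_lt (Nat.div_mul_le_self (nl - 1) dr) (Nat.sub_lt hnl Nat.one_pos)
  have ht1dr : nl ≤ (t0 + 1) * dr := by
    have h1 : dr * t0 + (nl - 1) % dr = nl - 1 := Nat.div_add_mod (nl - 1) dr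
    have h2 : (nl - 1) % dr < dr := Nat.mod_lt _ hdr
    have : (t0 + 1) * dr = dr * t0 + dr := by ring
    omega
  have ht0nr : t0 < nr := by
    have h1 : t0 * dl * dr < nr * dr := by
      calc t0 * dl * dr = t0 * dr * dl := by ring
        _ < nl * dl := Nat.mul_lt_mul_of_lt_of_le ht0dr le_rfl hdl
        _ = nr * dr := hbal
    have h2 : t0 * dl < nr := Nat.lt_of_mul_lt_mul_right h1
    calc t0 ≤ t0 * dl := Nat.le_mul_of_pos_right _ hdl
      _ < nr := h2
  have ht1 : t0 + 1 ≤ nr := ht0nr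
  -- find an agent in M' with no item among the top t0
  obtain ⟨i0, hi0, hempty⟩ :
      ∃ i0 < nl, ((Finset.range t0).filter (fun j => M' i0 j)).card = 0 := by
    by_contra h
    push_neg at h
    have hsum' := key M' hcol' t0 (le_of_lt ht0nr)
    have hge : nl ≤ ∑ i' ∈ Finset.range nl,
        ((Finset.range t0).filter (fun j => M' i' j)).card := by
      calc nl = ∑ _i' ∈ Finset.range nl, 1 := by simp
        _ ≤ _ := Finset.sum_le_sum fun i' hi' => by
            have := h i' (Finset.mem_range.mp hi')
            omega
    omega
  -- agent i has an item among the top t0 + 1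
  have hMi : 1 ≤ ((Finset.range (t0 + 1)).filter (fun j => M i j)).card := by
    by_contra h
    push_neg at h
    have hci : ((Finset.range (t0 + 1)).filter (fun j => M i j)).card = 0 := by omega
    have hsumM := key M hcol (t0 + 1) ht1
    have hge : nl ≤ ∑ i' ∈ Finset.range nl,
        ((Finset.range (t0 + 1)).filter (fun j => M i' j)).card :=
      ht1dr.trans_eq hsumM.symm
    have hsplit : ((Finset.range (t0 + 1)).filter (fun j => M i j)).card
        + ∑ i' ∈ (Finset.range nl).erase i,
            ((Finset.range (t0 + 1)).filter (fun j => M i' j)).card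
        = ∑ i' ∈ Finset.range nl,
            ((Finset.range (t0 + 1)).filter (fun j => M i' j)).card :=
      by exact Finset.add_sum_erase (Finset.range nl)
          (fun i' => ((Finset.range (t0 + 1)).filter (fun j => M i' j)).card)
          (Finset.mem_range.mpr hi)
    obtain ⟨i', hi'mem, hi'2⟩ : ∃ i' ∈ (Finset.range nl).erase i,
        2 ≤ ((Finset.range (t0 + 1)).filter (fun j => M i' j)).card := by
      by_contra h2
      push_neg at h2
      have hle : ∑ i' ∈ (Finset.range nl).erase i,
          ((Finset.range (t0 + 1)).filter (fun j => M i' j)).card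
          ≤ ∑ _i' ∈ (Finset.range nl).erase i, 1 :=
        Finset.sum_le_sum fun i' hi' => by have := h2 i' hi'; omega
      have hcard : ((Finset.range nl).erase i).card = nl - 1 := by
        rw [Finset.card_erase_of_mem (Finset.mem_range.mpr hi), Finset.card_range]
      rw [Finset.sum_const, hcard, smul_eq_mul, mul_one] at hle
      omega
    have hi'lt : i' < nl := Finset.mem_range.mp (Finset.mem_of_mem_erase hi'mem)
    have := hefl i hi i' hi'lt (t0 + 1) ht1
    omega
  obtain ⟨j0, hj0⟩ := Finset.card_pos.mp hMi
  rw [Finset.mem_filter, Finset.mem_range] at hj0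
  have hj0t0 : j0 ≤ t0 := by omega
  have hj0nr : j0 < nr := by omega
  refine ⟨i0, hi0, ?_⟩
  have hLHS : ∑ j ∈ (Finset.range nr).filter (fun j => M' i0 j), ul j
      ≤ (dl : ℝ) * ul t0 := by
    have hbound : ∀ j ∈ (Finset.range nr).filter (fun j => M' i0 j), ul j ≤ ul t0 := by
      intro j hj
      rw [Finset.mem_filter, Finset.mem_range] at hj
      have ht0j : t0 ≤ j := by
        by_contra hlt
        push_neg at hlt
        have : j ∈ (Finset.range t0).filter (fun j => M' i0 j) := by
          rw [Finset.mem_filter, Finset.mem_range]; exact ⟨hlt, hj.2⟩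
        have := Finset.card_pos.mpr ⟨j, this⟩
        omega
      exact hulm t0 j ht0j
    calc ∑ j ∈ (Finset.range nr).filter (fun j => M' i0 j), ul j
        ≤ ∑ _j ∈ (Finset.range nr).filter (fun j => M' i0 j), ul t0 :=
          Finset.sum_le_sum hbound
      _ = (dl : ℝ) * ul t0 := by
          rw [Finset.sum_const, hrow' i0 hi0, nsmul_eq_mul]
  have hRHS : (dl : ℝ) * ul t0 ≤ (dl : ℝ) * ∑ j ∈ (Finset.range nr).filter (fun j => M i j), ul j := by
    have hmem : j0 ∈ (Finset.range nr).filter (fun j => M i j) := by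
      rw [Finset.mem_filter, Finset.mem_range]; exact ⟨hj0nr, hj0.2⟩
    have h1 : ul t0 ≤ ul j0 := hulm j0 t0 hj0t0
    have h2 : ul j0 ≤ ∑ j ∈ (Finset.range nr).filter (fun j => M i j), ul j :=
      Finset.single_le_sum (fun j _ => hul0 j) hmem
    have : (0 : ℝ) ≤ (dl : ℝ) := Nat.cast_nonneg dl
    nlinarith
  linarith
end

section
/- In any complete matching of n^ℓ left-agents (common degree d^ℓ) and n^r right-agents (common degree d^r, with n^ℓ·d^ℓ = n^r·d^r) that is SD-EF1 over the left side with respect to a common left ranking 0 ≻ 1 ≻ ... ≻ n^r−1, every left-agent is matched to at least one right-agent in {0, 1, ..., ⌈n^ℓ/d^r⌉ − 1}. -/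
/-- In any complete matching of n^ℓ left agents (common degree d^ℓ) and n^r right
agents (common degree d^r, with n^ℓ·d^ℓ = n^r·d^r) that is SD-EF1 over the left side
with respect to the common left ranking 0 ≻ 1 ≻ … ≻ n^r−1, every left agent is matched
to at least one right agent in {0, 1, …, ⌈n^ℓ/d^r⌉ − 1}. -/
theorem stmt_11 (nl nr dl dr : ℕ) (hnl : 0 < nl) (hnr : 0 < nr)
    (hdl : 0 < dl) (hdr : 0 < dr) (hbal : nl * dl = nr * dr)
    (M : ℕ → ℕ → Bool)
    (hrow : ∀ i < nl, ((Finset.range nr).filter (fun j => M i j)).card = dl)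
    (hcol : ∀ j < nr, ((Finset.range nl).filter (fun i => M i j)).card = dr)
    (hefl : ∀ i < nl, ∀ i' < nl, ∀ t ≤ nr,
      ((Finset.range t).filter (fun j => M i' j)).card
        ≤ ((Finset.range t).filter (fun j => M i j)).card + 1) :
    ∀ i < nl, ∃ j < (nl + dr - 1) / dr, M i j = true := by
  intro i hi
  by_contra hcon
  push_neg at hcon
  -- nl ≤ dr * ⌈nl/dr⌉
  have hnlt : nl ≤ dr * ((nl + dr - 1) / dr) := by
    have h1 := Nat.div_add_mod (nl + dr - 1) dr
    have h2 : (nl + dr - 1) % dr < dr := Nat.mod_lt _ hdr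
    generalize dr * ((nl + dr - 1) / dr) = x at h1 ⊢
    omega
  -- ⌈nl/dr⌉ ≤ nr
  have hnlnr : nl ≤ dr * nr := by
    calc nl ≤ nl * dl := Nat.le_mul_of_pos_right nl hdl
    _ = nr * dr := hbal
    _ = dr * nr := Nat.mul_comm _ _
  have ht : (nl + dr - 1) / dr ≤ nr := by
    have := Nat.div_le_div_right (c := dr)
      (show nl + dr - 1 ≤ dr * nr + (dr - 1) by omega)
    rwa [Nat.mul_add_div hdr, Nat.div_eq_of_lt (show dr - 1 < dr by omega),
      Nat.add_zero] at this
  generalize hq : (nl + dr - 1) / dr = t at hnlt ht hcon ⊢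
  -- double counting: total matches in columns < t equals t * dr
  have key : ∑ i' ∈ Finset.range nl, ((Finset.range t).filter (fun j => M i' j)).card
      = t * dr := by
    simp_rw [Finset.card_filter]
    rw [Finset.sum_comm]
    rw [Finset.sum_congr rfl (fun j hj => ?_), Finset.sum_const, Finset.card_range,
      smul_eq_mul]
    rw [← Finset.card_filter]
    exact hcol j (lt_of_lt_of_le (Finset.mem_range.mp hj) ht)
  -- agent i has no match below t
  have h0 : ((Finset.range t).filter (fun j => M i j)).card = 0 := by
    rw [Finset.card_eq_zero, Finset.filter_eq_empty_iff]
    intro j hj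
    simpa using hcon j (Finset.mem_range.mp hj)
  -- every other agent has at most one match below t
  have hub : ∀ i' ∈ (Finset.range nl).erase i,
      ((Finset.range t).filter (fun j => M i' j)).card ≤ 1 := by
    intro i' hi'
    have := hefl i hi i' (Finset.mem_range.mp (Finset.mem_of_mem_erase hi')) t ht
    omega
  have hsum : ∑ i' ∈ Finset.range nl, ((Finset.range t).filter (fun j => M i' j)).card
      ≤ nl - 1 := by
    rw [← Finset.add_sum_erase _ _ (Finset.mem_range.mpr hi), h0, Nat.zero_add]
    calc ∑ i' ∈ (Finset.range nl).erase i, ((Finset.range t).filter (fun j => M i' j)).card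
        ≤ ((Finset.range nl).erase i).card * 1 := Finset.sum_le_card_nsmul _ _ 1 hub
      _ = nl - 1 := by rw [Finset.card_erase_of_mem (Finset.mem_range.mpr hi),
          Finset.card_range, Nat.mul_one]
  rw [key] at hsum
  have : t * dr = dr * t := Nat.mul_comm _ _
  omega
end

section
/- Let n = d² + d for d ≥ 2 (so n is divisible by d and n ≥ d²), with n agents per side, common degree d. Let all left-agents have identical utilities over right-agents: value d+1 for right-agents 0,...,n/d−2, value 1 for right-agents n/d−1,...,n/d+d−2, and value 0 otherwise. Then for every c ∈ {0,...,d−1}, no complete matching is simultaneously SD-EFc over the left side and ((c+2)/d)-MMS over the left side. -/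
def u12 (d j : ℕ) : ℕ := if j < d then d + 1 else if j < 2 * d then 1 else 0

open Finset

/-- Double counting. -/
lemma dc12 (M : ℕ → ℕ → Bool) (n t : ℕ) :
    ∑ i ∈ range n, ((range t).filter (fun j => M i j)).card
      = ∑ j ∈ range t, ((range n).filter (fun i => M i j)).card := by
  simp only [Finset.card_filter]
  exact Finset.sum_comm

/-- The witness matching. -/
def Mg12 (d : ℕ) : ℕ → ℕ → Bool := fun i j =>
  if i < d * d then decide (j = i / d) || decide (2 * d ≤ j ∧ j % d = i % d)
  else decide (d ≤ j ∧ j < 2 * d)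

lemma Mg12_row_lt (d : ℕ) (hd : 2 ≤ d) {i : ℕ} (hi : i < d * d) :
    (range (d * d + d)).filter (fun j => Mg12 d i j)
      = insert (i / d) ((range (d - 1)).image (fun g => d * (2 + g) + i % d)) := by
  have hd0 : 0 < d := by omega
  ext j
  simp only [Mg12, if_pos hi, mem_filter, mem_range, mem_insert, mem_image,
    Bool.or_eq_true, decide_eq_true_eq]
  constructor
  · rintro ⟨hj, h | ⟨h1, h2⟩⟩
    · exact Or.inl h
    · refine Or.inr ⟨(j - 2 * d) / d, ?_, ?_⟩
      · have h3 : j - 2 * d < (d - 1) * d := by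
          have : (d - 1) * d = d * d - 1 * d := Nat.sub_mul d 1 d
          omega
        exact Nat.div_lt_iff_lt_mul hd0 |>.mpr h3
      · have e1 : j - 2 * d = d * ((j - 2 * d) / d) + (j - 2 * d) % d :=
          (Nat.div_add_mod _ d).symm
        have e2 : (j - 2 * d) % d = i % d := by
          have : j = (j - 2 * d) + 2 * d := by omega
          rw [this] at h2
          rwa [Nat.add_mul_mod_self_right] at h2
        have e3 : d * (2 + (j - 2 * d) / d) = 2 * d + d * ((j - 2 * d) / d) := by ring
        omega
  · rintro (h | ⟨g, hg, rfl⟩)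
    · subst h
      have : i / d < d := Nat.div_lt_iff_lt_mul hd0 |>.mpr hi
      exact ⟨by nlinarith, Or.inl rfl⟩
    · have hg2 : 2 + g ≤ d := by omega
      have hmul : d * (2 + g) ≤ d * d := Nat.mul_le_mul_left d hg2
      have hmod : i % d < d := Nat.mod_lt _ hd0
      have h2g : d * 2 ≤ d * (2 + g) := Nat.mul_le_mul_left d (by omega)
      refine ⟨?_, Or.inr ⟨by omega, ?_⟩⟩
      · -- d * (2+g) + i % d < d*d + d
        omega
      · rw [Nat.mul_add_mod]
        exact Nat.mod_mod_of_dvd i dvd_rfl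

lemma Mg12_row_ge (d : ℕ) {i : ℕ} (hi : d * d ≤ i) :
    (range (d * d + d)).filter (fun j => Mg12 d i j) = Finset.Ico d (2 * d) := by
  have h2d : 2 * d ≤ d * d + d := by nlinarith
  ext j
  simp only [Mg12, if_neg (by omega : ¬ i < d * d), mem_filter, mem_range, mem_Ico,
    decide_eq_true_eq]
  omega

lemma Mg12_row_card (d : ℕ) (hd : 2 ≤ d) {i : ℕ} (hi : i < d * d + d) :
    ((range (d * d + d)).filter (fun j => Mg12 d i j)).card = d := by
  have hd0 : 0 < d := by omega
  rcases lt_or_ge i (d * d) with h | h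
  · rw [Mg12_row_lt d hd h]
    have hinj : Function.Injective (fun g => d * (2 + g) + i % d) := by
      intro a b hab
      simp only at hab
      have : d * (2 + a) = d * (2 + b) := by omega
      have := Nat.eq_of_mul_eq_mul_left hd0 this
      omega
    have hdiv : i / d < d := Nat.div_lt_iff_lt_mul hd0 |>.mpr h
    rw [Finset.card_insert_of_notMem, Finset.card_image_of_injective _ hinj,
      Finset.card_range]
    · omega
    · simp only [mem_image, mem_range]
      rintro ⟨g, hg, hgg⟩
      have : d * 2 ≤ d * (2 + g) := Nat.mul_le_mul_left d (by omega)
      omega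
  · rw [Mg12_row_ge d h, Nat.card_Ico]
    omega

lemma Mg12_col_card (d : ℕ) (hd : 2 ≤ d) {j : ℕ} (hj : j < d * d + d) :
    ((range (d * d + d)).filter (fun i => Mg12 d i j)).card = d := by
  have hd0 : 0 < d := by omega
  rcases lt_or_ge j d with h | h
  · -- high item: agents i with i < d*d and i / d = j, i.e. Ico (d*j) (d*j+d)
    have : (range (d * d + d)).filter (fun i => Mg12 d i j) = Finset.Ico (d * j) (d * j + d) := by
      ext i
      simp only [mem_filter, mem_range, mem_Ico]; simp only [Mg12]
      constructor
      · rintro ⟨hi, hM⟩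
        by_cases hlt : i < d * d
        · rw [if_pos hlt] at hM
          simp only [Bool.or_eq_true, decide_eq_true_eq] at hM
          rcases hM with rfl | ⟨h1, h2⟩
          · constructor
            · exact Nat.mul_div_le i d
            · have := Nat.div_add_mod i d
              have := Nat.mod_lt i hd0
              omega
          · omega
        · rw [if_neg hlt] at hM
          simp only [decide_eq_true_eq] at hM
          omega
      · rintro ⟨h1, h2⟩
        have hjd : d * j + d ≤ d * d := by
          have h5 : j + 1 ≤ d := by omega
          have h6 := Nat.mul_le_mul_left d h5
          have h7 : d * (j + 1) = d * j + d := by ring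
          omega
        have hlt : i < d * d := by omega
        have hdiv : i / d = j := by
          have := Nat.div_add_mod i d
          have hm := Nat.mod_lt i hd0
          have h3 : i / d ≤ j := by
            by_contra hcon
            push_neg at hcon
            have h8 : d * (j + 1) ≤ d * (i / d) := Nat.mul_le_mul_left d hcon
            have h9 : d * (j + 1) = d * j + d := by ring
            omega
          have h4 : j ≤ i / d := by
            by_contra hcon
            push_neg at hcon
            have h8 : d * (i / d + 1) ≤ d * j := Nat.mul_le_mul_left d hcon
            have h9 : d * (i / d + 1) = d * (i / d) + d := by ring
            omega
          omega
        refine ⟨by omega, ?_⟩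
        rw [if_pos hlt]
        simp [hdiv]
    rw [this, Nat.card_Ico]; omega
  · rcases lt_or_ge j (2 * d) with h2 | h2
    · -- low item: agents in [d*d, d*d+d)
      have : (range (d * d + d)).filter (fun i => Mg12 d i j)
          = Finset.Ico (d * d) (d * d + d) := by
        ext i
        simp only [mem_filter, mem_range, mem_Ico]; simp only [Mg12]
        constructor
        · rintro ⟨hi, hM⟩
          by_cases hlt : i < d * d
          · rw [if_pos hlt] at hM
            simp only [Bool.or_eq_true, decide_eq_true_eq] at hM
            rcases hM with rfl | ⟨h1', h2'⟩
            · have : i / d < d := Nat.div_lt_iff_lt_mul hd0 |>.mpr hlt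
              omega
            · omega
          · omega
        · rintro ⟨h1, h2'⟩
          refine ⟨by omega, ?_⟩
          rw [if_neg (by omega)]
          simp only [decide_eq_true_eq]
          omega
      rw [this, Nat.card_Ico]; omega
    · -- junk item: agents i < d*d with i % d = j % d
      have : (range (d * d + d)).filter (fun i => Mg12 d i j)
          = (range d).image (fun g => d * g + j % d) := by
        ext i
        simp only [mem_filter, mem_range, mem_image]; simp only [Mg12]
        constructor
        · rintro ⟨hi, hM⟩
          by_cases hlt : i < d * d
          · rw [if_pos hlt] at hM
            simp only [Bool.or_eq_true, decide_eq_true_eq] at hM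
            rcases hM with rfl | ⟨h1', h2'⟩
            · have : i / d < d := Nat.div_lt_iff_lt_mul hd0 |>.mpr hlt
              omega
            · refine ⟨i / d, Nat.div_lt_iff_lt_mul hd0 |>.mpr hlt, ?_⟩
              have := Nat.div_add_mod i d
              omega
          · rw [if_neg hlt] at hM
            simp only [decide_eq_true_eq] at hM
            omega
        · rintro ⟨g, hg, rfl⟩
          have hmod : j % d < d := Nat.mod_lt _ hd0
          have hlt : d * g + j % d < d * d := by
            have h5 : g + 1 ≤ d := by omega
            have h6 := Nat.mul_le_mul_left d h5
            have h7 : d * (g + 1) = d * g + d := by ring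
            omega
          refine ⟨by omega, ?_⟩
          rw [if_pos hlt]
          simp only [Bool.or_eq_true, decide_eq_true_eq]
          exact Or.inr ⟨h2, by rw [Nat.mul_add_mod, Nat.mod_mod_of_dvd j dvd_rfl]⟩
      rw [this, Finset.card_image_of_injective, Finset.card_range]
      intro a b hab
      simp only at hab
      have : d * a = d * b := by omega
      exact Nat.eq_of_mul_eq_mul_left hd0 this

lemma Mg12_row_sum (d : ℕ) (hd : 2 ≤ d) {i : ℕ} (hi : i < d * d + d) :
    d ≤ ∑ j ∈ (range (d * d + d)).filter (fun j => Mg12 d i j), u12 d j := by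
  have hd0 : 0 < d := by omega
  rcases lt_or_ge i (d * d) with h | h
  · rw [Mg12_row_lt d hd h]
    have hdiv : i / d < d := Nat.div_lt_iff_lt_mul hd0 |>.mpr h
    rw [Finset.sum_insert]
    · have : u12 d (i / d) = d + 1 := by simp [u12, hdiv]
      omega
    · simp only [mem_image, mem_range]
      rintro ⟨g, hg, hgg⟩
      have : d * 2 ≤ d * (2 + g) := Nat.mul_le_mul_left d (by omega)
      omega
  · rw [Mg12_row_ge d h]
    have : ∀ j ∈ Finset.Ico d (2 * d), u12 d j = 1 := by
      intro j hj
      simp only [mem_Ico] at hj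
      simp [u12, hj.2]
      omega
    rw [Finset.sum_congr rfl this, Finset.sum_const, Nat.card_Ico, smul_eq_mul]
    omega

/-- In the instance with n = d² + d agents per side (d ≥ 2), common degree d, and
common left utility `u12 d`, for every c ∈ {0,…,d−1} no complete matching is
simultaneously SD-EFc over the left side (with respect to the common ranking
0 ≻ 1 ≻ …) and ((c+2)/d)-MMS over the left side, where MMS is the left maximin share
(characterized by the hypotheses: it is attained by some complete matching and no
complete matching exceeds it). -/
theorem stmt_12 (d : ℕ) (hd : 2 ≤ d) (c : ℕ) (hc : c < d) (MMS : ℕ)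
    (hMMS1 : ∃ M : ℕ → ℕ → Bool,
      (∀ i < d ^ 2 + d, ((Finset.range (d ^ 2 + d)).filter (fun j => M i j)).card = d) ∧
      (∀ j < d ^ 2 + d, ((Finset.range (d ^ 2 + d)).filter (fun i => M i j)).card = d) ∧
      (∀ i < d ^ 2 + d, MMS ≤ ∑ j ∈ (Finset.range (d ^ 2 + d)).filter (fun j => M i j), u12 d j))
    (hMMS2 : ∀ M : ℕ → ℕ → Bool,
      (∀ i < d ^ 2 + d, ((Finset.range (d ^ 2 + d)).filter (fun j => M i j)).card = d) →
      (∀ j < d ^ 2 + d, ((Finset.range (d ^ 2 + d)).filter (fun i => M i j)).card = d) →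
      ∃ i < d ^ 2 + d, ∑ j ∈ (Finset.range (d ^ 2 + d)).filter (fun j => M i j), u12 d j ≤ MMS) :
    ¬ ∃ M : ℕ → ℕ → Bool,
      (∀ i < d ^ 2 + d, ((Finset.range (d ^ 2 + d)).filter (fun j => M i j)).card = d) ∧
      (∀ j < d ^ 2 + d, ((Finset.range (d ^ 2 + d)).filter (fun i => M i j)).card = d) ∧
      (∀ i < d ^ 2 + d, ∀ i' < d ^ 2 + d, ∀ t ≤ d ^ 2 + d,
        ((Finset.range t).filter (fun j => M i' j)).card
          ≤ ((Finset.range t).filter (fun j => M i j)).card + c) ∧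
      (∀ i < d ^ 2 + d,
        (c + 2) * MMS ≤ d * ∑ j ∈ (Finset.range (d ^ 2 + d)).filter (fun j => M i j), u12 d j) := by
  rintro ⟨M, hrow, hcol, hEF, hα⟩
  have hd0 : 0 < d := by omega
  have hsq : d ^ 2 = d * d := by ring
  have hnd : d ^ 2 + d = d * d + d := by rw [hsq]
  have h2dn : 2 * d ≤ d ^ 2 + d := by nlinarith
  -- Step 1: d ≤ MMS, via the witness matching Mg12.
  have hdMMS : d ≤ MMS := by
    obtain ⟨i, hi, hle⟩ := hMMS2 (Mg12 d)
      (fun i hi => by rw [hnd] at hi ⊢; exact Mg12_row_card d hd hi)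
      (fun j hj => by rw [hnd] at hj ⊢; exact Mg12_col_card d hd hj)
    have hs := Mg12_row_sum d hd (i := i) (by omega)
    rw [hnd] at hle
    exact le_trans hs hle
  -- Step 2: every agent has utility at least c + 2.
  have hutil : ∀ i < d ^ 2 + d,
      c + 2 ≤ ∑ j ∈ (Finset.range (d ^ 2 + d)).filter (fun j => M i j), u12 d j := by
    intro i hi
    have h1 := hα i hi
    have h2 : (c + 2) * d ≤ (c + 2) * MMS := Nat.mul_le_mul_left (c + 2) hdMMS
    have h3 : d * (c + 2) ≤ d * ∑ j ∈ (Finset.range (d ^ 2 + d)).filter (fun j => M i j), u12 d j := by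
      have : (c + 2) * d = d * (c + 2) := by ring
      omega
    exact Nat.le_of_mul_le_mul_left h3 hd0
  -- Step 3: some agent gets no item from the top-d prefix.
  have hsum1 : ∑ i ∈ Finset.range (d ^ 2 + d), ((Finset.range d).filter (fun j => M i j)).card
      = d * d := by
    rw [dc12]
    rw [Finset.sum_congr rfl (fun j hj => hcol j (by simp only [Finset.mem_range] at hj; omega)),
      Finset.sum_const, Finset.card_range, smul_eq_mul]
  obtain ⟨i0, hi0n, hi0⟩ : ∃ i0 < d ^ 2 + d,
      ((Finset.range d).filter (fun j => M i0 j)).card = 0 := by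
    by_contra hcon
    push_neg at hcon
    have hone : ∀ i ∈ Finset.range (d ^ 2 + d),
        1 ≤ ((Finset.range d).filter (fun j => M i j)).card := by
      intro i hi
      have := hcon i (Finset.mem_range.mp hi)
      omega
    have hge := Finset.sum_le_sum hone
    rw [hsum1, Finset.sum_const, Finset.card_range, smul_eq_mul, mul_one] at hge
    omega
  have hno : ∀ j < d, ¬ M i0 j := by
    intro j hj hM
    have : j ∈ (Finset.range d).filter (fun j => M i0 j) := by
      simp [Finset.mem_filter, Finset.mem_range, hj, hM]
    rw [Finset.card_eq_zero.mp hi0] at this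
    exact absurd this (Finset.notMem_empty j)
  -- Step 4: i0's utility equals its number of items in the top-2d prefix.
  have hu : ∑ j ∈ (Finset.range (d ^ 2 + d)).filter (fun j => M i0 j), u12 d j
      = ((Finset.range (2 * d)).filter (fun j => M i0 j)).card := by
    have hsub : (Finset.range (2 * d)).filter (fun j => M i0 j)
        ⊆ (Finset.range (d ^ 2 + d)).filter (fun j => M i0 j) :=
      Finset.filter_subset_filter _ (Finset.range_subset_range.mpr h2dn)
    rw [← Finset.sum_subset hsub (by
      intro x hx hnx
      simp only [Finset.mem_filter, Finset.mem_range] at hx hnx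
      have hx2 : ¬ x < 2 * d := fun h => hnx ⟨h, hx.2⟩
      simp [u12, hx2]
      omega)]
    have hconst : ∀ j ∈ (Finset.range (2 * d)).filter (fun j => M i0 j), u12 d j = 1 := by
      intro j hj
      simp only [Finset.mem_filter, Finset.mem_range] at hj
      have hjd : ¬ j < d := fun h => hno j h hj.2
      simp [u12, hjd, hj.1]
    rw [Finset.sum_congr rfl hconst, Finset.sum_const, smul_eq_mul, mul_one]
  -- Step 5: by SD-EFc every agent has at least 2 items in the top-2d prefix.
  have htwo : ∀ i ∈ Finset.range (d ^ 2 + d),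
      2 ≤ ((Finset.range (2 * d)).filter (fun j => M i j)).card := by
    intro i hi
    have hEFi := hEF i (Finset.mem_range.mp hi) i0 hi0n (2 * d) h2dn
    have hc2 : c + 2 ≤ ((Finset.range (2 * d)).filter (fun j => M i0 j)).card := by
      rw [← hu]; exact hutil i0 hi0n
    omega
  -- Step 6: double counting contradiction.
  have hsum2 : ∑ i ∈ Finset.range (d ^ 2 + d),
      ((Finset.range (2 * d)).filter (fun j => M i j)).card = 2 * d * d := by
    rw [dc12]
    rw [Finset.sum_congr rfl (fun j hj => hcol j (by simp only [Finset.mem_range] at hj; omega)),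
      Finset.sum_const, Finset.card_range, smul_eq_mul]
  have hge := Finset.sum_le_sum htwo
  rw [hsum2, Finset.sum_const, Finset.card_range, smul_eq_mul, mul_comm] at hge
  have : 2 * d * d = 2 * (d * d) := by ring
  have : (d ^ 2 + d) * 2 = 2 * (d * d) + 2 * d := by rw [hsq]; ring
  omega
end

section
/- In the instance with n = d² + d agents per side, common degree d ≥ 2, and left utilities valuing right-agents 0,...,n/d−2 at d+1 each, right-agents n/d−1,...,n/d+d−2 at 1 each, and the rest at 0, the left maximin share MMS^ℓ equals exactly d. -/
def u13 (d j : ℕ) : ℕ := if j < d then d + 1 else if j < 2 * d then 1 else 0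

def M13 (d i j : ℕ) : Bool :=
  if i < d ^ 2 then
    decide (j = i / d) || (decide (2 * d ≤ j) && decide (j % d = i % d))
  else
    decide (d ≤ j) && decide (j < 2 * d)

lemma sum_u13 (d : ℕ) (hd : 2 ≤ d) :
    ∑ j ∈ Finset.range (d ^ 2 + d), u13 d j = d ^ 2 + 2 * d := by
  have hdd : d ^ 2 = d * d := sq d
  have h2d : 2 * d ≤ d ^ 2 + d := by nlinarith
  have hd2 : d ≤ 2 * d := by omega
  rw [Finset.range_eq_Ico, ← Finset.sum_Ico_consecutive _ (Nat.zero_le (2 * d)) h2d,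
    ← Finset.sum_Ico_consecutive _ (Nat.zero_le d) hd2]
  have c1 : ∀ j ∈ Finset.Ico 0 d, u13 d j = d + 1 := by
    intro j hj
    simp only [Finset.mem_Ico] at hj
    simp [u13, hj.2]
  have c2 : ∀ j ∈ Finset.Ico d (2 * d), u13 d j = 1 := by
    intro j hj
    simp only [Finset.mem_Ico] at hj
    simp [u13, hj.2, Nat.not_lt.mpr hj.1]
  have c3 : ∀ j ∈ Finset.Ico (2 * d) (d ^ 2 + d), u13 d j = 0 := by
    intro j hj
    simp only [Finset.mem_Ico] at hj
    have h1 : ¬ j < d := by omega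
    have h2 : ¬ j < 2 * d := by omega
    simp [u13, h1, h2]
  rw [Finset.sum_congr rfl c1, Finset.sum_congr rfl c2, Finset.sum_congr rfl c3,
    Finset.sum_const, Finset.sum_const, Finset.sum_const, Nat.card_Ico, Nat.card_Ico,
    smul_eq_mul, smul_eq_mul, smul_eq_mul, Nat.sub_zero]
  have : d * (d + 1) = d ^ 2 + d := by ring
  omega

lemma bigleft (d : ℕ) (hd : 2 ≤ d) (i : ℕ) (hi : i < d ^ 2) :
    (Finset.range (d ^ 2 + d)).filter (fun j => M13 d i j) =
      insert (i / d) ((Finset.Ico 2 (d + 1)).image (fun c => c * d + i % d)) := by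
  have hd0 : 0 < d := by omega
  have hdd : d ^ 2 = d * d := sq d
  ext j
  simp only [Finset.mem_filter, Finset.mem_range, Finset.mem_insert, Finset.mem_image,
    Finset.mem_Ico, M13, hi, if_pos, Bool.or_eq_true, Bool.and_eq_true, decide_eq_true_eq]
  constructor
  · rintro ⟨hjn, hj | ⟨h2j, hmod⟩⟩
    · exact Or.inl hj
    · refine Or.inr ⟨j / d, ⟨?_, ?_⟩, ?_⟩
      · exact (Nat.le_div_iff_mul_le hd0).mpr (by omega)
      · exact (Nat.div_lt_iff_lt_mul hd0).mpr (by nlinarith)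
      · rw [← hmod]
        conv_rhs => rw [← Nat.div_add_mod j d]
        ring
  · rintro (hj | ⟨c, ⟨hc2, hcd⟩, hcj⟩)
    · subst hj
      have : i / d < d := Nat.div_lt_of_lt_mul (by omega)
      exact ⟨by omega, Or.inl rfl⟩
    · subst hcj
      have himod : i % d < d := Nat.mod_lt i hd0
      have hc2d : 2 * d ≤ c * d := Nat.mul_le_mul_right d hc2
      have hcdd : c * d ≤ d * d := Nat.mul_le_mul_right d (by omega)
      refine ⟨by omega, Or.inr ⟨by omega, ?_⟩⟩
      simp [Nat.add_mod, Nat.mul_mod_left, Nat.mod_mod_of_dvd, Nat.mod_eq_of_lt himod]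

lemma smallleft (d : ℕ) (hd : 2 ≤ d) (i : ℕ) (hi : ¬ i < d ^ 2) :
    (Finset.range (d ^ 2 + d)).filter (fun j => M13 d i j) = Finset.Ico d (2 * d) := by
  have hdd : d ^ 2 = d * d := sq d
  have h2d : 2 * d ≤ d ^ 2 + d := by nlinarith
  ext j
  simp only [Finset.mem_filter, Finset.mem_range, Finset.mem_Ico, M13, hi, if_false,
    ite_false, Bool.and_eq_true, decide_eq_true_eq]
  omega

lemma highright (d : ℕ) (hd : 2 ≤ d) (j : ℕ) (hj : j < d) :
    (Finset.range (d ^ 2 + d)).filter (fun i => M13 d i j) =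
      Finset.Ico (j * d) (j * d + d) := by
  have hd0 : 0 < d := by omega
  have hdd : d ^ 2 = d * d := sq d
  have hjd : j * d + d ≤ d * d := by nlinarith
  ext i
  simp only [Finset.mem_filter, Finset.mem_range, Finset.mem_Ico]
  constructor
  · rintro ⟨hin, hM⟩
    unfold M13 at hM
    by_cases hi : i < d ^ 2
    · simp only [hi, if_pos, Bool.or_eq_true, Bool.and_eq_true, decide_eq_true_eq] at hM
      rcases hM with hM | ⟨h2j, _⟩
      · subst hM
        constructor
        · calc (i / d) * d ≤ d * (i / d) + i % d := by rw [mul_comm]; omega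
            _ = i := Nat.div_add_mod i d
        · conv_lhs => rw [← Nat.div_add_mod i d]
          have : i % d < d := Nat.mod_lt i hd0
          rw [mul_comm]; omega
      · omega
    · simp only [hi, if_neg, Bool.and_eq_true, decide_eq_true_eq, not_false_iff] at hM
      omega
  · rintro ⟨h1, h2⟩
    have hi : i < d ^ 2 := by omega
    refine ⟨by omega, ?_⟩
    unfold M13
    simp only [hi, if_pos, Bool.or_eq_true, Bool.and_eq_true, decide_eq_true_eq]
    left
    symm
    exact Nat.div_eq_of_lt_le (by nlinarith) (by nlinarith)

lemma midright (d : ℕ) (hd : 2 ≤ d) (j : ℕ) (hj1 : d ≤ j) (hj2 : j < 2 * d) :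
    (Finset.range (d ^ 2 + d)).filter (fun i => M13 d i j) =
      Finset.Ico (d ^ 2) (d ^ 2 + d) := by
  have hd0 : 0 < d := by omega
  have hdd : d ^ 2 = d * d := sq d
  ext i
  simp only [Finset.mem_filter, Finset.mem_range, Finset.mem_Ico]
  constructor
  · rintro ⟨hin, hM⟩
    unfold M13 at hM
    by_cases hi : i < d ^ 2
    · exfalso
      simp only [hi, if_pos, Bool.or_eq_true, Bool.and_eq_true, decide_eq_true_eq] at hM
      rcases hM with hM | ⟨h2j, _⟩
      · have : i / d < d := Nat.div_lt_of_lt_mul (by omega)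
        omega
      · omega
    · omega
  · rintro ⟨h1, h2⟩
    refine ⟨h2, ?_⟩
    unfold M13
    simp only [Nat.not_lt.mpr h1, if_neg, Bool.and_eq_true, decide_eq_true_eq, not_lt,
      not_false_iff]
    exact ⟨by omega, by omega⟩

lemma zeroright (d : ℕ) (hd : 2 ≤ d) (j : ℕ) (hj1 : 2 * d ≤ j) (hj2 : j < d ^ 2 + d) :
    (Finset.range (d ^ 2 + d)).filter (fun i => M13 d i j) =
      (Finset.range d).image (fun c => c * d + j % d) := by
  have hd0 : 0 < d := by omega
  have hdd : d ^ 2 = d * d := sq d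
  have hjmod : j % d < d := Nat.mod_lt j hd0
  ext i
  simp only [Finset.mem_filter, Finset.mem_range, Finset.mem_image]
  constructor
  · rintro ⟨hin, hM⟩
    unfold M13 at hM
    by_cases hi : i < d ^ 2
    · simp only [hi, if_pos, Bool.or_eq_true, Bool.and_eq_true, decide_eq_true_eq] at hM
      rcases hM with hM | ⟨h2j, hmod⟩
      · exfalso
        have : i / d < d := Nat.div_lt_of_lt_mul (by omega)
        omega
      · refine ⟨i / d, Nat.div_lt_of_lt_mul (by omega), ?_⟩
        rw [hmod]
        conv_rhs => rw [← Nat.div_add_mod i d]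
        ring
    · simp only [hi, if_neg, Bool.and_eq_true, decide_eq_true_eq, not_false_iff] at hM
      omega
  · rintro ⟨c, hc, hci⟩
    subst hci
    have hi : c * d + j % d < d ^ 2 := by
      have : c * d + d ≤ d * d := by nlinarith
      omega
    refine ⟨by omega, ?_⟩
    unfold M13
    simp only [hi, if_pos, Bool.or_eq_true, Bool.and_eq_true, decide_eq_true_eq]
    right
    refine ⟨hj1, ?_⟩
    simp [Nat.add_mod, Nat.mul_mod_left, Nat.mod_mod_of_dvd, Nat.mod_eq_of_lt hjmod]

/-- In the instance with n = d² + d agents per side (d ≥ 2), common degree d, and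
common left utility `u13 d`, the left maximin share MMS^ℓ equals exactly d: some
complete matching gives every left agent utility at least d, and every complete
matching gives some left agent utility at most d. -/
theorem stmt_13 (d : ℕ) (hd : 2 ≤ d) :
    (∃ M : ℕ → ℕ → Bool,
      (∀ i < d ^ 2 + d, ((Finset.range (d ^ 2 + d)).filter (fun j => M i j)).card = d) ∧
      (∀ j < d ^ 2 + d, ((Finset.range (d ^ 2 + d)).filter (fun i => M i j)).card = d) ∧
      (∀ i < d ^ 2 + d,
        d ≤ ∑ j ∈ (Finset.range (d ^ 2 + d)).filter (fun j => M i j), u13 d j)) ∧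
    (∀ M : ℕ → ℕ → Bool,
      (∀ i < d ^ 2 + d, ((Finset.range (d ^ 2 + d)).filter (fun j => M i j)).card = d) →
      (∀ j < d ^ 2 + d, ((Finset.range (d ^ 2 + d)).filter (fun i => M i j)).card = d) →
      ∃ i < d ^ 2 + d,
        ∑ j ∈ (Finset.range (d ^ 2 + d)).filter (fun j => M i j), u13 d j ≤ d) := by
  have hd0 : 0 < d := by omega
  have hdd : d ^ 2 = d * d := sq d
  have hdle : d ≤ d ^ 2 := by nlinarith
  have hinj : ∀ r : ℕ, Function.Injective (fun c => c * d + r) := by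
    intro r c c' h
    simp only at h
    have := Nat.eq_of_mul_eq_mul_right hd0 (show c * d = c' * d by omega)
    exact this
  constructor
  · refine ⟨M13 d, ?_, ?_, ?_⟩
    · -- left degrees
      intro i hi
      by_cases hbig : i < d ^ 2
      · rw [bigleft d hd i hbig]
        rw [Finset.card_insert_of_notMem, Finset.card_image_of_injective _ (hinj _),
          Nat.card_Ico]
        · omega
        · simp only [Finset.mem_image, Finset.mem_Ico, not_exists]
          rintro c ⟨⟨hc2, hcd⟩, hceq⟩
          have : i / d < d := Nat.div_lt_of_lt_mul (by omega)
          have h2d : 2 * d ≤ c * d := Nat.mul_le_mul_right d hc2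
          omega
      · rw [smallleft d hd i hbig, Nat.card_Ico]
        omega
    · -- right degrees
      intro j hj
      by_cases h1 : j < d
      · rw [highright d hd j h1, Nat.card_Ico]
        omega
      · by_cases h2 : j < 2 * d
        · rw [midright d hd j (by omega) h2, Nat.card_Ico]
          omega
        · rw [zeroright d hd j (by omega) hj,
            Finset.card_image_of_injective _ (hinj _), Finset.card_range]
    · -- left utilities ≥ d
      intro i hi
      by_cases hbig : i < d ^ 2
      · have hmem : i / d ∈ (Finset.range (d ^ 2 + d)).filter (fun j => M13 d i j) := by
          have hlt : i / d < d := Nat.div_lt_of_lt_mul (by omega)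
          simp only [Finset.mem_filter, Finset.mem_range]
          refine ⟨by omega, ?_⟩
          simp [M13, hbig]
        have := Finset.single_le_sum (f := u13 d) (fun j _ => Nat.zero_le _) hmem
        have hu : u13 d (i / d) = d + 1 := by
          have hlt : i / d < d := Nat.div_lt_of_lt_mul (by omega)
          simp [u13, hlt]
        omega
      · rw [smallleft d hd i hbig]
        have c2 : ∀ j ∈ Finset.Ico d (2 * d), u13 d j = 1 := by
          intro j hj
          simp only [Finset.mem_Ico] at hj
          simp [u13, hj.2, Nat.not_lt.mpr hj.1]
        rw [Finset.sum_congr rfl c2, Finset.sum_const, Nat.card_Ico, smul_eq_mul]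
        omega
  · -- upper bound
    intro M h1 h2
    by_contra hcon
    push_neg at hcon
    have key : (d ^ 2 + d) * (d + 1) ≤
        ∑ i ∈ Finset.range (d ^ 2 + d),
          ∑ j ∈ (Finset.range (d ^ 2 + d)).filter (fun j => M i j), u13 d j := by
      calc (d ^ 2 + d) * (d + 1)
          = ∑ _i ∈ Finset.range (d ^ 2 + d), (d + 1) := by
            rw [Finset.sum_const, Finset.card_range, smul_eq_mul]
        _ ≤ _ := Finset.sum_le_sum fun i hi => hcon i (Finset.mem_range.mp hi)
    have swap : ∑ i ∈ Finset.range (d ^ 2 + d),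
          ∑ j ∈ (Finset.range (d ^ 2 + d)).filter (fun j => M i j), u13 d j
        = ∑ j ∈ Finset.range (d ^ 2 + d),
            ((Finset.range (d ^ 2 + d)).filter (fun i => M i j)).card * u13 d j := by
      simp_rw [Finset.sum_filter]
      rw [Finset.sum_comm]
      refine Finset.sum_congr rfl fun j _ => ?_
      rw [← Finset.sum_filter, Finset.sum_const, smul_eq_mul]
    have cards : ∑ j ∈ Finset.range (d ^ 2 + d),
          ((Finset.range (d ^ 2 + d)).filter (fun i => M i j)).card * u13 d j
        = d * (d ^ 2 + 2 * d) := by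
      rw [Finset.sum_congr rfl fun j hj => by
        rw [h2 j (Finset.mem_range.mp hj)]]
      rw [← Finset.mul_sum, sum_u13 d hd]
    rw [swap, cards] at key
    nlinarith
end

section
/- Let n = 7, d = 3, and let u(j) = 6 − j for j ∈ {0,...,6}. In any partition of the multiset consisting of 3 copies of each element of {0,...,6} into 7 bundles of size 3, each containing distinct elements (i.e., any complete 3-regular bipartite matching viewed from one side), such that every bundle has u-value exactly 9: up to permutation of the bundles, the bundles must be {0,4,5}, {0,4,5}, {0,3,6}, {1,2,6}, {1,2,6}, {1,3,5}, {2,3,4}. -/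
set_option maxRecDepth 100000

/-- The unique (up to permutation of the bundles) list of bundles of value exactly 9
in the n = 7, d = 3 instance with utility u(j) = 6 − j. -/
def target14 : Fin 7 → Finset ℕ :=
  ![{0,4,5}, {0,4,5}, {0,3,6}, {1,2,6}, {1,2,6}, {1,3,5}, {2,3,4}]

/-- The five possible bundles, indexed by a natural number class. -/
def bnd : ℕ → Finset ℕ := fun c =>
  if c = 0 then {0,3,6} else if c = 1 then {0,4,5} else if c = 2 then {1,2,6}
  else if c = 3 then {1,3,5} else {2,3,4}

/-- Target classes. -/
def tgt : Fin 7 → ℕ := ![1,1,0,2,2,3,4]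

lemma classify : ∀ S ∈ (Finset.range 7).powerset, S.card = 3 → (∑ j ∈ S, (6-j)) = 9 →
    S = bnd 0 ∨ S = bnd 1 ∨ S = bnd 2 ∨ S = bnd 3 ∨ S = bnd 4 := by decide

lemma count_ofFn {n : ℕ} (f : Fin n → ℕ) (a : ℕ) :
    (List.ofFn f).count a = (Finset.univ.filter (fun i => f i = a)).card := by
  rw [List.ofFn_eq_map, Fin.univ_def]
  simp only [Finset.filter, Finset.card, List.count_eq_countP, List.countP_map,
    List.countP_eq_length_filter, List.filter_map, Multiset.quot_mk_to_coe'',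
    Multiset.filter_coe, Multiset.coe_card, List.length_map]
  apply congrArg
  apply List.filter_congr
  intro x _
  simp only [Function.comp_apply]; rw [beq_eq_decide]

lemma exists_perm_of_perm {n : ℕ} {f g : Fin n → ℕ} (h : (List.ofFn f).Perm (List.ofFn g)) :
    ∃ σ : Equiv.Perm (Fin n), ∀ k, f (σ k) = g k := by
  have h1 : f ∘ Tuple.sort f = g ∘ Tuple.sort g := by
    apply List.ofFn_injective
    refine List.Perm.eq_of_sortedLE (Tuple.monotone_sort f).sortedLE_ofFn
      (Tuple.monotone_sort g).sortedLE_ofFn ?_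
    exact (((Tuple.sort f).ofFn_comp_perm f).trans h).trans
      ((Tuple.sort g).ofFn_comp_perm g).symm
  refine ⟨(Tuple.sort g).symm.trans (Tuple.sort f), fun k => ?_⟩
  have := congrFun h1 ((Tuple.sort g).symm k)
  simpa using this

/-- Let n = 7, d = 3 and u(j) = 6 − j.  In any complete 3-regular bipartite matching
(7×7 binary matrix, all row and column sums 3) in which every left bundle has u-value
exactly 9, the bundles must be, up to a permutation of the bundles,
{0,4,5}, {0,4,5}, {0,3,6}, {1,2,6}, {1,2,6}, {1,3,5}, {2,3,4}. -/
theorem stmt_14 (M : ℕ → ℕ → Bool)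
    (hrow : ∀ i < 7, ((Finset.range 7).filter (fun j => M i j)).card = 3)
    (hcol : ∀ j < 7, ((Finset.range 7).filter (fun i => M i j)).card = 3)
    (hval : ∀ i < 7, ∑ j ∈ (Finset.range 7).filter (fun j => M i j), (6 - j) = 9) :
    ∃ σ : Equiv.Perm (Fin 7), ∀ k : Fin 7,
      (Finset.range 7).filter (fun j => M ((σ k : Fin 7) : ℕ) j) = target14 k := by
  set S : Fin 7 → Finset ℕ := fun i => (Finset.range 7).filter (fun j => M i j) with hS
  have hclass : ∀ i : Fin 7, ∃ c, c < 5 ∧ S i = bnd c := by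
    intro i
    have hsub : S i ∈ (Finset.range 7).powerset :=
      Finset.mem_powerset.2 (Finset.filter_subset _ _)
    rcases classify (S i) hsub (hrow i i.isLt) (hval i i.isLt) with h|h|h|h|h
    exacts [⟨0, by norm_num, h⟩, ⟨1, by norm_num, h⟩, ⟨2, by norm_num, h⟩,
      ⟨3, by norm_num, h⟩, ⟨4, by norm_num, h⟩]
  choose F hF5 hFB using hclass
  -- column counts in terms of F
  have hcolF : ∀ j : ℕ, j < 7 →
      (Finset.univ.filter (fun i : Fin 7 => j ∈ bnd (F i))).card = 3 := by
    intro j hj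
    have h1 := hcol j hj
    rw [← Nat.Iio_eq_range, ← Fin.map_valEmbedding_univ, Finset.filter_map,
      Finset.card_map] at h1
    rw [← h1]
    apply Finset.card_bij (fun i _ => i) (fun i hi => by
        simp only [Finset.mem_filter, Finset.mem_univ, true_and, Function.comp_apply] at hi ⊢
        have hmem : j ∈ S i := by rw [hFB i]; exact hi
        exact (Finset.mem_filter.1 hmem).2)
      (fun _ _ _ _ h => h)
      (fun i hi => by
        refine ⟨i, ?_, rfl⟩
        simp only [Finset.mem_filter, Finset.mem_univ, true_and, Function.comp_apply] at hi ⊢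
        rw [← hFB i]
        exact Finset.mem_filter.2 ⟨Finset.mem_range.2 hj, hi⟩)
  -- fiber cardinalities
  set Nc : ℕ → ℕ := fun c => (Finset.univ.filter (fun i : Fin 7 => F i = c)).card with hNc
  have hsplit : ∀ j : ℕ, j < 7 →
      (Finset.univ.filter (fun i : Fin 7 => j ∈ bnd (F i))).card
        = ∑ c ∈ (Finset.range 5).filter (fun c => j ∈ bnd c), Nc c := by
    intro j hj
    rw [Finset.card_eq_sum_card_fiberwise (f := F)
      (t := (Finset.range 5).filter (fun c => j ∈ bnd c))
      (fun i hi => by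
        simp only [Finset.mem_coe, Finset.mem_filter, Finset.mem_univ, true_and] at hi ⊢
        exact ⟨Finset.mem_range.2 (hF5 i), hi⟩)]
    apply Finset.sum_congr rfl
    intro c hc
    simp only [Finset.mem_filter, Finset.mem_range] at hc
    apply congrArg
    rw [Finset.filter_filter]
    apply Finset.filter_congr
    intro i _
    constructor
    · rintro ⟨-, h⟩; exact h
    · intro h; exact ⟨h ▸ hc.2, h⟩
  have e0 := (hsplit 0 (by norm_num)).symm.trans (hcolF 0 (by norm_num))
  have e1 := (hsplit 1 (by norm_num)).symm.trans (hcolF 1 (by norm_num))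
  have e2 := (hsplit 2 (by norm_num)).symm.trans (hcolF 2 (by norm_num))
  have e3 := (hsplit 3 (by norm_num)).symm.trans (hcolF 3 (by norm_num))
  have e4 := (hsplit 4 (by norm_num)).symm.trans (hcolF 4 (by norm_num))
  have e5 := (hsplit 5 (by norm_num)).symm.trans (hcolF 5 (by norm_num))
  have e6 := (hsplit 6 (by norm_num)).symm.trans (hcolF 6 (by norm_num))
  have hfil0 : (Finset.range 5).filter (fun c => (0:ℕ) ∈ bnd c) = {0,1} := by decide
  have hfil1 : (Finset.range 5).filter (fun c => (1:ℕ) ∈ bnd c) = {2,3} := by decide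
  have hfil2 : (Finset.range 5).filter (fun c => (2:ℕ) ∈ bnd c) = {2,4} := by decide
  have hfil3 : (Finset.range 5).filter (fun c => (3:ℕ) ∈ bnd c) = {0,3,4} := by decide
  have hfil4 : (Finset.range 5).filter (fun c => (4:ℕ) ∈ bnd c) = {1,4} := by decide
  have hfil5 : (Finset.range 5).filter (fun c => (5:ℕ) ∈ bnd c) = {1,3} := by decide
  have hfil6 : (Finset.range 5).filter (fun c => (6:ℕ) ∈ bnd c) = {0,2} := by decide
  rw [hfil0] at e0; rw [hfil1] at e1; rw [hfil2] at e2; rw [hfil3] at e3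
  rw [hfil4] at e4; rw [hfil5] at e5; rw [hfil6] at e6
  have spair : ∀ (a b : ℕ), a ≠ b → ∀ f : ℕ → ℕ, ∑ c ∈ ({a,b} : Finset ℕ), f c = f a + f b := by
    intro a b hab f
    rw [Finset.sum_insert (by simp [hab]), Finset.sum_singleton]
  rw [spair 0 1 (by norm_num)] at e0
  rw [spair 2 3 (by norm_num)] at e1
  rw [spair 2 4 (by norm_num)] at e2
  rw [Finset.sum_insert (by decide), spair 3 4 (by norm_num)] at e3
  rw [spair 1 4 (by norm_num)] at e4
  rw [spair 1 3 (by norm_num)] at e5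
  rw [spair 0 2 (by norm_num)] at e6
  have hN0 : Nc 0 = 1 := by omega
  have hN1 : Nc 1 = 2 := by omega
  have hN2 : Nc 2 = 2 := by omega
  have hN3 : Nc 3 = 1 := by omega
  have hN4 : Nc 4 = 1 := by omega
  -- list permutation
  have hperm : (List.ofFn F).Perm (List.ofFn tgt) := by
    rw [List.perm_iff_count]
    intro a
    rw [count_ofFn, count_ofFn]
    rcases Nat.lt_or_ge a 5 with ha | ha
    · interval_cases a
      · rw [show (Finset.univ.filter (fun i : Fin 7 => tgt i = 0)).card = 1 from by decide]
        exact hN0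
      · rw [show (Finset.univ.filter (fun i : Fin 7 => tgt i = 1)).card = 2 from by decide]
        exact hN1
      · rw [show (Finset.univ.filter (fun i : Fin 7 => tgt i = 2)).card = 2 from by decide]
        exact hN2
      · rw [show (Finset.univ.filter (fun i : Fin 7 => tgt i = 3)).card = 1 from by decide]
        exact hN3
      · rw [show (Finset.univ.filter (fun i : Fin 7 => tgt i = 4)).card = 1 from by decide]
        exact hN4
    · rw [Finset.card_eq_zero.2, Finset.card_eq_zero.2]
      · apply Finset.filter_eq_empty_iff.2
        intro i _
        have : tgt i < 5 := by fin_cases i <;> decide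
        omega
      · apply Finset.filter_eq_empty_iff.2
        intro i _
        have := hF5 i
        omega
  obtain ⟨σ, hσ⟩ := exists_perm_of_perm hperm
  refine ⟨σ, fun k => ?_⟩
  have : S (σ k) = bnd (tgt k) := by rw [hFB (σ k), hσ k]
  rw [show ((Finset.range 7).filter (fun j => M ((σ k : Fin 7) : ℕ) j)) = S (σ k) from rfl, this]
  fin_cases k <;> decide
end

section
/- For n = 7, d = 3, with identical utilities u^ℓ(j) = 6−j for left-agents and u^r(i) = 6−i for right-agents, no complete matching (7×7 binary matrix with all row/column sums 3) is 0.89-DMMS; in particular, in any complete matching where every left-agent has utility ≥ 9, some right-agent has utility ≤ 8, while MMS^r = 9. -/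
set_option maxRecDepth 8000

/-- Complete matching for n = 7, d = 3: a 7×7 binary matrix with all row and column
sums equal to 3. -/
def Comp15 (M : ℕ → ℕ → Bool) : Prop :=
  (∀ i < 7, ((Finset.range 7).filter (fun j => M i j)).card = 3) ∧
  (∀ j < 7, ((Finset.range 7).filter (fun i => M i j)).card = 3)

/-- An explicit complete matching whose every column utility is exactly 9. -/
def L15 : List (ℕ × ℕ) :=
  [(2,0),(3,0),(4,0),(1,1),(3,1),(5,1),(0,2),(3,2),(6,2),(0,3),(4,3),(5,3),
   (1,4),(2,4),(6,4),(0,5),(4,5),(5,5),(1,6),(2,6),(6,6)]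

def Mex15 : ℕ → ℕ → Bool := fun i j => decide ((i, j) ∈ L15)

/-- The five 3-subsets of {0,…,6} whose (6−j)-utility is exactly 9. -/
def T15 : ℕ → Finset ℕ
  | 0 => {0,3,6} | 1 => {0,4,5} | 2 => {1,2,6} | 3 => {1,3,5} | _ => {2,3,4}

theorem classify15 : ∀ S ∈ (Finset.range 7).powerset, S.card = 3 → (∑ j ∈ S, (6 - j)) = 9 →
    S = T15 0 ∨ S = T15 1 ∨ S = T15 2 ∨ S = T15 3 ∨ S = T15 4 := by decide

/-- Total column utility is 63 whenever all row counts are 3. -/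
theorem total15 (M : ℕ → ℕ → Bool)
    (h : ∀ i < 7, ((Finset.range 7).filter (fun j => M i j)).card = 3) :
    ∑ j ∈ Finset.range 7, ∑ i ∈ (Finset.range 7).filter (fun i => M i j), (6 - i) = 63 := by
  have : ∑ j ∈ Finset.range 7, ∑ i ∈ (Finset.range 7).filter (fun i => M i j), (6 - i)
      = ∑ i ∈ Finset.range 7, ∑ j ∈ Finset.range 7, if M i j then (6 - i) else 0 := by
    rw [Finset.sum_comm]
    exact Finset.sum_congr rfl fun j _ => (Finset.sum_filter _ _)
  rw [this]
  have h2 : ∀ i ∈ Finset.range 7,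
      (∑ j ∈ Finset.range 7, if M i j then (6 - i) else 0) = (6 - i) * 3 := by
    intro i hi
    rw [← Finset.sum_filter, Finset.sum_const, h i (Finset.mem_range.mp hi), smul_eq_mul,
      Nat.mul_comm]
  rw [Finset.sum_congr rfl h2]
  decide

theorem pigeon15 (f : ℕ → ℕ) (h : ∑ j ∈ Finset.range 7, f j = 63)
    (h9 : ∀ j < 7, 9 ≤ f j) : ∀ j < 7, f j = 9 := by
  intro j hj
  have hjm : j ∈ Finset.range 7 := Finset.mem_range.mpr hj
  have h1 : ∑ k ∈ (Finset.range 7).erase j, 9 ≤ ∑ k ∈ (Finset.range 7).erase j, f k :=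
    Finset.sum_le_sum fun k hk =>
      h9 k (Finset.mem_range.mp (Finset.mem_of_mem_erase hk))
  rw [Finset.sum_const, Finset.card_erase_of_mem hjm] at h1
  have h2 : f j + ∑ k ∈ (Finset.range 7).erase j, f k = 63 := by
    rw [Finset.add_sum_erase _ f hjm]; exact h
  have := h9 j hj
  simp only [Finset.card_range, smul_eq_mul] at h1
  omega

/-- The hard combinatorial core: no complete matching can have every row utility and
every column utility equal to 9. -/
theorem hard15 (M : ℕ → ℕ → Bool) (hM : Comp15 M)
    (hrow : ∀ i < 7, ∑ j ∈ (Finset.range 7).filter (fun j => M i j), (6 - j) = 9)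
    (hcol : ∀ j < 7, ∑ i ∈ (Finset.range 7).filter (fun i => M i j), (6 - i) = 9) :
    False := by
  set R : ℕ → Finset ℕ := fun i => (Finset.range 7).filter (fun j => M i j) with hR
  have hclass : ∀ i < 7, R i = T15 0 ∨ R i = T15 1 ∨ R i = T15 2 ∨ R i = T15 3 ∨
      R i = T15 4 := fun i hi =>
    classify15 _ (Finset.mem_powerset.mpr (Finset.filter_subset _ _)) (hM.1 i hi) (hrow i hi)
  set A : ℕ → Finset ℕ := fun k => (Finset.range 7).filter (fun i => R i = T15 k) with hA
  have hmem : ∀ j < 7, ∀ i, (M i j = true ↔ j ∈ R i) := by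
    intro j hj i; simp [hR, Finset.mem_filter, Finset.mem_range, hj]
  have hcover : ∀ j < 7, (Finset.range 7).filter (fun i => M i j)
      = (Finset.range 7).filter (fun i => j ∈ R i) := by
    intro j hj
    exact Finset.filter_congr fun i _ => by simp [hmem j hj i]
  have hdisj : ∀ k k', T15 k ≠ T15 k' → Disjoint (A k) (A k') := by
    intro k k' hne
    rw [Finset.disjoint_left]
    intro a h1 h2
    rw [hA, Finset.mem_filter] at h1 h2
    exact hne (h1.2 ▸ h2.2)
  -- column 1 : types 2, 3
  have e1 : (Finset.range 7).filter (fun i => M i 1) = A 2 ∪ A 3 := by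
    rw [hcover 1 (by norm_num), ← Finset.filter_or]
    exact Finset.filter_congr fun i hi => by
      rcases hclass i (Finset.mem_range.mp hi) with h|h|h|h|h <;> rw [h] <;> decide
  -- column 2 : types 2, 4
  have e2 : (Finset.range 7).filter (fun i => M i 2) = A 2 ∪ A 4 := by
    rw [hcover 2 (by norm_num), ← Finset.filter_or]
    exact Finset.filter_congr fun i hi => by
      rcases hclass i (Finset.mem_range.mp hi) with h|h|h|h|h <;> rw [h] <;> decide
  -- column 6 : types 0, 2
  have e6 : (Finset.range 7).filter (fun i => M i 6) = A 0 ∪ A 2 := by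
    rw [hcover 6 (by norm_num), ← Finset.filter_or]
    exact Finset.filter_congr fun i hi => by
      rcases hclass i (Finset.mem_range.mp hi) with h|h|h|h|h <;> rw [h] <;> decide
  -- column 3 : types 0, 3, 4
  have e3 : (Finset.range 7).filter (fun i => M i 3) = A 0 ∪ A 3 ∪ A 4 := by
    rw [hcover 3 (by norm_num), ← Finset.filter_or, ← Finset.filter_or]
    exact Finset.filter_congr fun i hi => by
      rcases hclass i (Finset.mem_range.mp hi) with h|h|h|h|h <;> rw [h] <;> decide
  have d23 := hdisj 2 3 (by decide)
  have d24 := hdisj 2 4 (by decide)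
  have d02 := hdisj 0 2 (by decide)
  have d03 := hdisj 0 3 (by decide)
  have d04 := hdisj 0 4 (by decide)
  have d34 := hdisj 3 4 (by decide)
  have d034 : Disjoint (A 0 ∪ A 3) (A 4) := Finset.disjoint_union_left.mpr ⟨d04, d34⟩
  -- card equations
  have c1 : (A 2).card + (A 3).card = 3 := by
    rw [← Finset.card_union_of_disjoint d23, ← e1]; exact hM.2 1 (by norm_num)
  have c2 : (A 2).card + (A 4).card = 3 := by
    rw [← Finset.card_union_of_disjoint d24, ← e2]; exact hM.2 2 (by norm_num)
  have c6 : (A 0).card + (A 2).card = 3 := by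
    rw [← Finset.card_union_of_disjoint d02, ← e6]; exact hM.2 6 (by norm_num)
  have c3 : (A 0).card + (A 3).card + (A 4).card = 3 := by
    rw [← Finset.card_union_of_disjoint d03, ← Finset.card_union_of_disjoint d034, ← e3]
    exact hM.2 3 (by norm_num)
  -- sum equations
  have s1 : (∑ i ∈ A 2, (6 - i)) + (∑ i ∈ A 3, (6 - i)) = 9 := by
    rw [← Finset.sum_union d23, ← e1]; exact hcol 1 (by norm_num)
  have s2 : (∑ i ∈ A 2, (6 - i)) + (∑ i ∈ A 4, (6 - i)) = 9 := by
    rw [← Finset.sum_union d24, ← e2]; exact hcol 2 (by norm_num)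
  have s6 : (∑ i ∈ A 0, (6 - i)) + (∑ i ∈ A 2, (6 - i)) = 9 := by
    rw [← Finset.sum_union d02, ← e6]; exact hcol 6 (by norm_num)
  have s3 : (∑ i ∈ A 0, (6 - i)) + (∑ i ∈ A 3, (6 - i)) + (∑ i ∈ A 4, (6 - i)) = 9 := by
    rw [← Finset.sum_union d03, ← Finset.sum_union d034, ← e3]; exact hcol 3 (by norm_num)
  have hc3 : (A 3).card = 1 := by omega
  have hc4 : (A 4).card = 1 := by omega
  have hs3 : (∑ i ∈ A 3, (6 - i)) = 3 := by omega
  have hs4 : (∑ i ∈ A 4, (6 - i)) = 3 := by omega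
  obtain ⟨x, hx⟩ := Finset.card_eq_one.mp hc3
  obtain ⟨y, hy⟩ := Finset.card_eq_one.mp hc4
  rw [hx, Finset.sum_singleton] at hs3
  rw [hy, Finset.sum_singleton] at hs4
  have hxA : x ∈ A 3 := hx ▸ Finset.mem_singleton_self x
  have hyA : y ∈ A 4 := hy ▸ Finset.mem_singleton_self y
  rw [hA, Finset.mem_filter, Finset.mem_range] at hxA hyA
  have hx3 : x = 3 := by omega
  have hy3 : y = 3 := by omega
  have : T15 3 = T15 4 := by
    rw [← hxA.2, hx3, ← hy3, hyA.2]
  exact absurd this (by decide)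

/-- For n = 7, d = 3, with identical utilities u^ℓ(j) = 6 − j on the left and
u^r(i) = 6 − i on the right: MMS^r = 9 (first conjunct); in any complete matching where
every left agent has utility ≥ 9, some right agent has utility ≤ 8 (second conjunct);
and no complete matching is 0.89-DMMS (third conjunct). -/
theorem stmt_15 :
    ((∃ M : ℕ → ℕ → Bool, Comp15 M ∧
        ∀ j < 7, 9 ≤ ∑ i ∈ (Finset.range 7).filter (fun i => M i j), (6 - i)) ∧
      (∀ M : ℕ → ℕ → Bool, Comp15 M →
        ∃ j < 7, ∑ i ∈ (Finset.range 7).filter (fun i => M i j), (6 - i) ≤ 9)) ∧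
    (∀ M : ℕ → ℕ → Bool, Comp15 M →
      (∀ i < 7, 9 ≤ ∑ j ∈ (Finset.range 7).filter (fun j => M i j), (6 - j)) →
      ∃ j < 7, ∑ i ∈ (Finset.range 7).filter (fun i => M i j), (6 - i) ≤ 8) ∧
    (∀ M : ℕ → ℕ → Bool, Comp15 M →
      ¬ ((∀ i < 7, (0.89 : ℝ) * 9
            ≤ ((∑ j ∈ (Finset.range 7).filter (fun j => M i j), (6 - j) : ℕ) : ℝ)) ∧
         (∀ j < 7, (0.89 : ℝ) * 9
            ≤ ((∑ i ∈ (Finset.range 7).filter (fun i => M i j), (6 - i) : ℕ) : ℝ)))) := by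
  have main2 : ∀ M : ℕ → ℕ → Bool, Comp15 M →
      (∀ i < 7, 9 ≤ ∑ j ∈ (Finset.range 7).filter (fun j => M i j), (6 - j)) →
      ∃ j < 7, ∑ i ∈ (Finset.range 7).filter (fun i => M i j), (6 - i) ≤ 8 := by
    intro M hM hrow9
    by_contra hcon
    push_neg at hcon
    -- all column utilities ≥ 9, hence = 9 by the total; all row utilities = 9 similarly
    have hcoltot := total15 M hM.1
    have hrowtot := total15 (fun a b => M b a) hM.2
    have hcol9 : ∀ j < 7, 9 ≤ ∑ i ∈ (Finset.range 7).filter (fun i => M i j), (6 - i) :=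
      fun j hj => by have := hcon j hj; omega
    have hcoleq := pigeon15 _ hcoltot hcol9
    have hroweq := pigeon15 _ hrowtot hrow9
    exact hard15 M hM hroweq hcoleq
  refine ⟨⟨⟨Mex15, ⟨by decide, by decide⟩, by decide⟩, ?_⟩, main2, ?_⟩
  · intro M hM
    by_contra hcon
    push_neg at hcon
    have hcoltot := total15 M hM.1
    have h10 : ∀ j ∈ Finset.range 7, 10 ≤ ∑ i ∈ (Finset.range 7).filter (fun i => M i j), (6 - i) :=
      fun j hj => hcon j (Finset.mem_range.mp hj)
    have := Finset.sum_le_sum h10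
    rw [Finset.sum_const, Finset.card_range, smul_eq_mul] at this
    omega
  · intro M hM ⟨hl, hr⟩
    have hrow9 : ∀ i < 7, 9 ≤ ∑ j ∈ (Finset.range 7).filter (fun j => M i j), (6 - j) := by
      intro i hi
      have h := hl i hi
      by_contra hlt
      push_neg at hlt
      have : ((∑ j ∈ (Finset.range 7).filter (fun j => M i j), (6 - j) : ℕ) : ℝ) ≤ 8 := by
        exact_mod_cast Nat.cast_le.mpr (by omega : (∑ j ∈ (Finset.range 7).filter (fun j => M i j), (6 - j)) ≤ 8)
      norm_num at h this
      linarith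
    obtain ⟨j, hj, hle⟩ := main2 M hM hrow9
    have h := hr j hj
    have : ((∑ i ∈ (Finset.range 7).filter (fun i => M i j), (6 - i) : ℕ) : ℝ) ≤ 8 :=
      by exact_mod_cast hle
    norm_num at h this
    linarith
end

section
/- For n agents per side and common degree d = 2, with identical utilities on each side, the matching M defined (for n even) by M_i^ℓ = M_i^r = {i, n−1−i} for all i is complete, SD-DEF1, and achieves min_i u^ℓ(M_i^ℓ) = MMS^ℓ and min_j u^r(M_j^r) = MMS^r, where utilities are (wlog) nonincreasing in index. -/
open Finset

lemma pair_filter_eq (n i : ℕ) (hn : 0 < n) (hi : i < n) :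
    (Finset.range n).filter (fun j => j = i ∨ j = n - 1 - i) = {i, n - 1 - i} := by
  ext j
  simp only [mem_filter, mem_range, mem_insert, mem_singleton]
  constructor
  · rintro ⟨_, h⟩; exact h
  · rintro (rfl | rfl) <;> constructor <;> omega

lemma pair_card (n i : ℕ) (hn : 0 < n) (heven : Even n) (hi : i < n) :
    ((Finset.range n).filter (fun j => j = i ∨ j = n - 1 - i)).card = 2 := by
  rw [pair_filter_eq n i hn hi]
  obtain ⟨m, hm⟩ := heven
  rw [card_pair (by omega)]

lemma double_count (M : ℕ → ℕ → Bool) (n k : ℕ) :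
    ∑ i ∈ range n, ((range k).filter (fun j => M i j)).card
      = ∑ j ∈ range k, ((range n).filter (fun i => M i j)).card := by
  simp only [card_filter]
  exact Finset.sum_comm

lemma prefix_lem (n : ℕ) (heven : Even n) (i i' : ℕ) (hi : i < n) (hi' : i' < n)
    (t : ℕ) (ht : t ≤ n) :
    ((Finset.range t).filter (fun j => j = i' ∨ j = n - 1 - i')).card
      ≤ ((Finset.range t).filter (fun j => j = i ∨ j = n - 1 - i)).card + 1 := by
  obtain ⟨m, hm⟩ := heven
  have hsub : (Finset.range t).filter (fun j => j = i' ∨ j = n - 1 - i')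
      ⊆ ({i', n - 1 - i'} : Finset ℕ) := by
    intro j hj
    simp only [mem_filter, mem_range] at hj
    simp only [mem_insert, mem_singleton]
    tauto
  have h2 : ((Finset.range t).filter (fun j => j = i' ∨ j = n - 1 - i')).card ≤ 2 :=
    le_trans (card_le_card hsub) (le_trans (card_insert_le _ _) (by simp))
  rcases Nat.lt_or_ge ((Finset.range t).filter (fun j => j = i' ∨ j = n - 1 - i')).card 2 with h | h
  · omega
  · have heq : (Finset.range t).filter (fun j => j = i' ∨ j = n - 1 - i')
        = ({i', n - 1 - i'} : Finset ℕ) := by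
      apply Finset.eq_of_subset_of_card_le hsub
      calc ({i', n - 1 - i'} : Finset ℕ).card ≤ 2 :=
            le_trans (card_insert_le _ _) (by simp)
        _ ≤ _ := h
    have h1 : i' < t := by
      have : i' ∈ (Finset.range t).filter (fun j => j = i' ∨ j = n - 1 - i') := by
        rw [heq]; simp
      simp only [mem_filter, mem_range] at this; exact this.1
    have h2' : n - 1 - i' < t := by
      have : n - 1 - i' ∈ (Finset.range t).filter (fun j => j = i' ∨ j = n - 1 - i') := by
        rw [heq]; simp
      simp only [mem_filter, mem_range] at this; exact this.1
    have hmin : min i (n - 1 - i) ∈ (Finset.range t).filter (fun j => j = i ∨ j = n - 1 - i) := by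
      simp only [mem_filter, mem_range]
      constructor
      · omega
      · rcases min_choice i (n - 1 - i) with hc | hc <;> rw [hc] <;> tauto
    have : 1 ≤ ((Finset.range t).filter (fun j => j = i ∨ j = n - 1 - i)).card :=
      card_pos.mpr ⟨_, hmin⟩
    omega

lemma key (n : ℕ) (hn : 0 < n) (heven : Even n)
    (u : ℕ → ℝ) (hum : ∀ j j', j ≤ j' → u j' ≤ u j)
    (M : ℕ → ℕ → Bool)
    (hrow : ∀ i < n, ((Finset.range n).filter (fun j => M i j)).card = 2)
    (hcol : ∀ j < n, ((Finset.range n).filter (fun i => M i j)).card = 2) :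
    ∃ i' < n, ∀ i < n,
      ∑ j ∈ (Finset.range n).filter (fun j => M i' j), u j
        ≤ ∑ j ∈ (Finset.range n).filter (fun j => j = i ∨ j = n - 1 - i), u j := by
  obtain ⟨mhalf, hmh⟩ := heven
  obtain ⟨i', hi'mem, hminim⟩ := Finset.exists_min_image (range n)
    (fun i => ∑ j ∈ (Finset.range n).filter (fun j => M i j), u j) ⟨0, mem_range.2 hn⟩
  refine ⟨i', mem_range.1 hi'mem, fun i hi => ?_⟩
  set a := min i (n - 1 - i) with ha
  set b := max i (n - 1 - i) with hb
  have hab : a + b = n - 1 := by omega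
  have haltb : a < b := by omega
  have hblt : b < n := by omega
  have hclaim : ∃ i0 ∈ range n,
      (∀ j ∈ (Finset.range n).filter (fun j => M i0 j), a ≤ j) ∧
      (∃ j ∈ (Finset.range n).filter (fun j => M i0 j), b ≤ j) := by
    by_contra hcon
    push_neg at hcon
    set A := (range n).filter
      (fun i0 => ∃ j ∈ (Finset.range n).filter (fun j => M i0 j), j < a) with hA
    set B := (range n).filter
      (fun i0 => ∀ j ∈ (Finset.range n).filter (fun j => M i0 j), j < b) with hB
    have hcover : ∀ i0 ∈ range n, i0 ∈ A ∪ B := by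
      intro i0 h0
      by_cases hall : ∀ j ∈ (Finset.range n).filter (fun j => M i0 j), a ≤ j
      · refine mem_union_right _ (mem_filter.2 ⟨h0, ?_⟩)
        intro j hj
        have := hcon i0 h0 hall j hj
        omega
      · push_neg at hall
        refine mem_union_left _ (mem_filter.2 ⟨h0, ?_⟩)
        obtain ⟨j, hj1, hj2⟩ := hall
        exact ⟨j, hj1, by omega⟩
    have hsuma : ∑ i0 ∈ range n, ((range a).filter (fun j => M i0 j)).card = 2 * a := by
      rw [double_count]
      rw [Finset.sum_congr rfl (fun j hj => hcol j (by
        have := mem_range.1 hj; omega))]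
      simp [mul_comm]
    have hsumb : ∑ i0 ∈ range n, ((range b).filter (fun j => M i0 j)).card = 2 * b := by
      rw [double_count]
      rw [Finset.sum_congr rfl (fun j hj => hcol j (by
        have := mem_range.1 hj; omega))]
      simp [mul_comm]
    have hAcard : A.card ≤ 2 * a := by
      have h1 : ∀ i0 ∈ A, 1 ≤ ((range a).filter (fun j => M i0 j)).card := by
        intro i0 h0
        obtain ⟨j, hj1, hj2⟩ := (mem_filter.1 h0).2
        have hjm := mem_filter.1 hj1
        exact card_pos.mpr ⟨j, mem_filter.2 ⟨mem_range.2 hj2, hjm.2⟩⟩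
      calc A.card = ∑ _i0 ∈ A, 1 := by simp
        _ ≤ ∑ i0 ∈ A, ((range a).filter (fun j => M i0 j)).card := sum_le_sum h1
        _ ≤ ∑ i0 ∈ range n, ((range a).filter (fun j => M i0 j)).card :=
            sum_le_sum_of_subset (filter_subset _ _)
        _ = 2 * a := hsuma
    have hBcard : n + B.card ≤ 2 * b := by
      have hBsub : B ⊆ range n := filter_subset _ _
      have hBtwo : ∀ i0 ∈ B, ((range b).filter (fun j => M i0 j)).card = 2 := by
        intro i0 h0
        have hall := (mem_filter.1 h0).2
        have heq : (range b).filter (fun j => M i0 j) = (range n).filter (fun j => M i0 j) := by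
          ext j
          simp only [mem_filter, mem_range]
          constructor
          · rintro ⟨h1, h2⟩; exact ⟨by omega, h2⟩
          · rintro ⟨h1, h2⟩
            exact ⟨hall j (mem_filter.2 ⟨mem_range.2 h1, h2⟩), h2⟩
        rw [heq]
        exact hrow i0 (mem_range.1 (hBsub h0))
      have hrest : ∀ i0 ∈ range n \ B, 1 ≤ ((range b).filter (fun j => M i0 j)).card := by
        intro i0 h0
        have h0' := mem_sdiff.1 h0
        have hiA : i0 ∈ A := by
          rcases mem_union.1 (hcover i0 h0'.1) with h | h
          · exact h
          · exact absurd h h0'.2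
        obtain ⟨j, hj1, hj2⟩ := (mem_filter.1 hiA).2
        have hjm := mem_filter.1 hj1
        exact card_pos.mpr ⟨j, mem_filter.2 ⟨mem_range.2 (by omega), hjm.2⟩⟩
      have hBle : B.card ≤ n := by
        have := card_le_card hBsub; simpa using this
      set S1 := ∑ i0 ∈ range n \ B, ((range b).filter (fun j => M i0 j)).card with hS1
      set S2 := ∑ i0 ∈ B, ((range b).filter (fun j => M i0 j)).card with hS2
      have htot : S1 + S2 = 2 * b := by
        rw [hS1, hS2, Finset.sum_sdiff hBsub]
        exact hsumb
      have c1 : S2 = 2 * B.card := by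
        rw [hS2, Finset.sum_congr rfl hBtwo]
        simp [mul_comm]
      have c2 : (range n \ B).card ≤ S1 := by
        rw [hS1]
        calc (range n \ B).card = ∑ _i0 ∈ range n \ B, 1 := by simp
          _ ≤ _ := sum_le_sum hrest
      have c3 : (range n \ B).card = n - B.card := by
        rw [card_sdiff_of_subset hBsub, card_range]
      omega
    have hcov2 : range n ⊆ A ∪ B := fun x hx => hcover x hx
    have : n ≤ A.card + B.card := by
      calc n = (range n).card := (card_range n).symm
        _ ≤ (A ∪ B).card := card_le_card hcov2
        _ ≤ A.card + B.card := card_union_le _ _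
    omega
  -- extract the good agent and bound its bundle
  obtain ⟨i0, hi0mem, hge, j2, hj2mem, hj2b⟩ := hclaim
  have hrow2 := hrow i0 (mem_range.1 hi0mem)
  obtain ⟨x, y, hxy, hset⟩ := Finset.card_eq_two.1 hrow2
  have hxmem : x ∈ (Finset.range n).filter (fun j => M i0 j) := by rw [hset]; simp
  have hymem : y ∈ (Finset.range n).filter (fun j => M i0 j) := by rw [hset]; simp
  have hax : a ≤ x := hge x hxmem
  have hay : a ≤ y := hge y hymem
  have hj2xy : j2 = x ∨ j2 = y := by
    have := hj2mem; rw [hset] at this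
    simpa using this
  have hsum0 : ∑ j ∈ (Finset.range n).filter (fun j => M i0 j), u j = u x + u y := by
    rw [hset, Finset.sum_pair hxy]
  have hbound : ∑ j ∈ (Finset.range n).filter (fun j => M i0 j), u j ≤ u a + u b := by
    rw [hsum0]
    rcases hj2xy with h | h
    · have h1 : u x ≤ u b := h ▸ hum b j2 hj2b
      have h2 : u y ≤ u a := hum a y hay
      linarith
    · have h1 : u y ≤ u b := h ▸ hum b j2 hj2b
      have h2 : u x ≤ u a := hum a x hax
      linarith
  have htarget : ∑ j ∈ (Finset.range n).filter (fun j => j = i ∨ j = n - 1 - i), u j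
      = u a + u b := by
    rw [pair_filter_eq n i hn hi, Finset.sum_pair (by omega)]
    rcases le_total i (n - 1 - i) with hc | hc
    · have e1 : a = i := by omega
      have e2 : b = n - 1 - i := by omega
      rw [e1, e2]
    · have e1 : a = n - 1 - i := by omega
      have e2 : b = i := by omega
      rw [e1, e2]; ring
  calc ∑ j ∈ (Finset.range n).filter (fun j => M i' j), u j
      ≤ ∑ j ∈ (Finset.range n).filter (fun j => M i0 j), u j := hminim i0 hi0mem
    _ ≤ u a + u b := hbound
    _ = _ := htarget.symm

/-- For n agents per side (n even and positive), common degree d = 2, with identical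
nonincreasing nonnegative utilities u^ℓ (left) and u^r (right) — so the common ranking
on each side is 0 ≻ 1 ≻ … ≻ n−1 — the symmetric matching M with
M_i^ℓ = M_i^r = {i, n−1−i} is complete (all degrees 2), SD-DEF1, and achieves
min_i u^ℓ(M_i^ℓ) = MMS^ℓ and min_j u^r(M_j^r) = MMS^r: for every complete 2-regular
matching M' there is an agent whose M'-bundle is worth no more than every bundle of M. -/
theorem stmt_16 (n : ℕ) (hn : 0 < n) (heven : Even n)
    (ul ur : ℕ → ℝ)
    (hul0 : ∀ j, 0 ≤ ul j) (hur0 : ∀ i, 0 ≤ ur i)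
    (hulm : ∀ j j', j ≤ j' → ul j' ≤ ul j)
    (hurm : ∀ i i', i ≤ i' → ur i' ≤ ur i) :
    (∀ i < n, ((Finset.range n).filter (fun j => j = i ∨ j = n - 1 - i)).card = 2) ∧
    (∀ j < n, ((Finset.range n).filter (fun i => i = j ∨ i = n - 1 - j)).card = 2) ∧
    (∀ i < n, ∀ i' < n, ∀ t ≤ n,
      ((Finset.range t).filter (fun j => j = i' ∨ j = n - 1 - i')).card
        ≤ ((Finset.range t).filter (fun j => j = i ∨ j = n - 1 - i)).card + 1) ∧
    (∀ j < n, ∀ j' < n, ∀ t ≤ n,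
      ((Finset.range t).filter (fun i => i = j' ∨ i = n - 1 - j')).card
        ≤ ((Finset.range t).filter (fun i => i = j ∨ i = n - 1 - j)).card + 1) ∧
    (∀ M' : ℕ → ℕ → Bool,
      (∀ i < n, ((Finset.range n).filter (fun j => M' i j)).card = 2) →
      (∀ j < n, ((Finset.range n).filter (fun i => M' i j)).card = 2) →
      ∃ i' < n, ∀ i < n,
        ∑ j ∈ (Finset.range n).filter (fun j => M' i' j), ul j
          ≤ ∑ j ∈ (Finset.range n).filter (fun j => j = i ∨ j = n - 1 - i), ul j) ∧
    (∀ M' : ℕ → ℕ → Bool,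
      (∀ i < n, ((Finset.range n).filter (fun j => M' i j)).card = 2) →
      (∀ j < n, ((Finset.range n).filter (fun i => M' i j)).card = 2) →
      ∃ j' < n, ∀ j < n,
        ∑ i ∈ (Finset.range n).filter (fun i => M' i j'), ur i
          ≤ ∑ i ∈ (Finset.range n).filter (fun i => i = j ∨ i = n - 1 - j), ur i) := by
  refine ⟨fun i hi => pair_card n i hn heven hi,
    fun j hj => pair_card n j hn heven hj,
    fun i hi i' hi' t ht => prefix_lem n heven i i' hi hi' t ht,
    fun j hj j' hj' t ht => prefix_lem n heven j j' hj hj' t ht,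
    fun M' hrow hcol => key n hn heven ul hulm M' hrow hcol,
    fun M' hrow hcol => key n hn heven ur hurm (fun i j => M' j i) hcol hrow⟩
end

section
/- Suppose a complete matching M is MMS over the left side (every left-agent's utility is at least MMS^ℓ) under a common left utility u^ℓ, and among all such matchings M minimizes the number of left-agents whose utility equals MMS^ℓ. Then M is EF1 over the left side: for any left-agents i, i', either u^ℓ(M_i^ℓ) ≥ u^ℓ(M_{i'}^ℓ), or there exists j' ∈ M_{i'}^ℓ with u^ℓ(M_i^ℓ) ≥ u^ℓ(M_{i'}^ℓ \ {j'}). -/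
/-- Complete matching: n agents per side, every row and column of the n×n binary
matrix sums to d. -/
def Comp18 (n d : ℕ) (M : ℕ → ℕ → Bool) : Prop :=
  (∀ i < n, ((Finset.range n).filter (fun j => M i j)).card = d) ∧
  (∀ j < n, ((Finset.range n).filter (fun i => M i j)).card = d)

/-- The utility of left agent i's bundle under the common additive left utility u. -/
def val18 (n : ℕ) (u : ℕ → ℝ) (M : ℕ → ℕ → Bool) (i : ℕ) : ℝ :=
  ∑ j ∈ (Finset.range n).filter (fun j => M i j), u j

/-- If two finsets have equal cardinality and the sum of `u` over `A` is less than over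
`B`, some element of `A` has strictly smaller `u`-value than some element of `B`. -/
lemma aux18_swap_pair (A B : Finset ℕ) (u : ℕ → ℝ) (hcard : A.card = B.card)
    (hsum : ∑ j ∈ A, u j < ∑ j ∈ B, u j) :
    ∃ j ∈ A, ∃ j' ∈ B, u j < u j' := by
  by_contra h
  push_neg at h
  have hA : A.Nonempty := by
    rcases A.eq_empty_or_nonempty with rfl | h'
    · exfalso
      have : B = ∅ := Finset.card_eq_zero.mp hcard.symm
      subst this; simp at hsum
    · exact h'
  obtain ⟨a, haA, ha⟩ := A.exists_min_image u hA
  have h1 : ∑ j ∈ B, u j ≤ B.card • u a :=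
    Finset.sum_le_card_nsmul B u (u a) (fun j' hj' => h a haA j' hj')
  have h2 : A.card • u a ≤ ∑ j ∈ A, u j :=
    Finset.card_nsmul_le_sum A u (u a) ha
  rw [hcard] at h2
  exact absurd (le_trans h1 h2) (not_le.2 hsum)

lemma aux18_card_swap {s : Finset ℕ} {x y : ℕ} (hx : x ∈ s) (hy : y ∉ s) :
    (insert y (s.erase x)).card = s.card := by
  have h1 : y ∉ s.erase x := fun h => hy (Finset.mem_of_mem_erase h)
  have h2 := Finset.card_pos.2 ⟨x, hx⟩
  rw [Finset.card_insert_of_notMem h1, Finset.card_erase_of_mem hx]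
  omega

lemma aux18_sum_swap {s : Finset ℕ} {x y : ℕ} (f : ℕ → ℝ) (hx : x ∈ s) (hy : y ∉ s) :
    ∑ b ∈ insert y (s.erase x), f b = ∑ b ∈ s, f b - f x + f y := by
  have h1 : y ∉ s.erase x := fun h => hy (Finset.mem_of_mem_erase h)
  rw [Finset.sum_insert h1, Finset.sum_erase_eq_sub hx]
  ring

/-- Suppose a complete matching M is MMS over the left side (every left agent's bundle
is worth at least MMS, the left maximin share characterized by hMMS1 and hMMS2) and,
among all such matchings, M minimizes the number of left agents whose utility equals
MMS.  Then M is EF1 over the left side: for all left agents i, i', either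
u^ℓ(M_i) ≥ u^ℓ(M_{i'}) or some j' ∈ M_{i'} has u^ℓ(M_i) ≥ u^ℓ(M_{i'} \ {j'}). -/
theorem stmt_18 (n d : ℕ) (hn : 0 < n) (hd : 0 < d)
    (u : ℕ → ℝ) (hu : ∀ j, 0 ≤ u j) (MMS : ℝ)
    (hMMS1 : ∃ M' : ℕ → ℕ → Bool, Comp18 n d M' ∧ ∀ i < n, MMS ≤ val18 n u M' i)
    (hMMS2 : ∀ M' : ℕ → ℕ → Bool, Comp18 n d M' → ∃ i < n, val18 n u M' i ≤ MMS)
    (M : ℕ → ℕ → Bool) (hM : Comp18 n d M)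
    (hMmms : ∀ i < n, MMS ≤ val18 n u M i)
    (hmin : ∀ M' : ℕ → ℕ → Bool, Comp18 n d M' → (∀ i < n, MMS ≤ val18 n u M' i) →
      {i | i < n ∧ val18 n u M i = MMS}.ncard ≤ {i | i < n ∧ val18 n u M' i = MMS}.ncard) :
    ∀ i < n, ∀ i' < n,
      val18 n u M i' ≤ val18 n u M i ∨
      ∃ j' < n, M i' j' = true ∧ val18 n u M i' - u j' ≤ val18 n u M i := by
  intro i hi i' hi'
  by_contra hcon
  push_neg at hcon
  obtain ⟨hlt, hviol⟩ := hcon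
  -- an agent i0 with value exactly MMS
  obtain ⟨i0, hi0n, hle0⟩ := hMMS2 M hM
  have hI0 : val18 n u M i0 = MMS := le_antisymm hle0 (hMmms i0 hi0n)
  have hi0i : val18 n u M i0 ≤ val18 n u M i := hI0 ▸ hMmms i hi
  -- bundles
  set S0 : Finset ℕ := (Finset.range n).filter (fun j => M i0 j) with hS0
  set S1 : Finset ℕ := (Finset.range n).filter (fun j => M i' j) with hS1
  have hcard0 : S0.card = d := hM.1 i0 hi0n
  have hcard1 : S1.card = d := hM.1 i' hi'
  -- i0 also violates EF1 towards i'
  have hviol0 : ∀ j' < n, M i' j' = true → val18 n u M i0 < val18 n u M i' - u j' :=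
    fun j' hj' hm => lt_of_le_of_lt hi0i (hviol j' hj' hm)
  have hS1ne : S1.Nonempty := Finset.card_pos.mp (by omega)
  obtain ⟨j'₀, hj'₀⟩ := hS1ne
  have hj'₀n : j'₀ < n := Finset.mem_range.mp (Finset.mem_filter.mp hj'₀).1
  have hj'₀m : M i' j'₀ = true := by simpa using (Finset.mem_filter.mp hj'₀).2
  have hlt0 : val18 n u M i0 < val18 n u M i' := by
    have := hviol0 j'₀ hj'₀n hj'₀m
    have := hu j'₀
    linarith
  have hne : i0 ≠ i' := fun h => by rw [h] at hlt0; exact lt_irrefl _ hlt0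
  -- swap pair
  have hdiffcard : (S0 \ S1).card = (S1 \ S0).card := by
    have := Finset.card_sdiff_add_card_inter S0 S1
    have := Finset.card_sdiff_add_card_inter S1 S0
    rw [Finset.inter_comm] at this
    omega
  have hdiffsum : ∑ b ∈ S0 \ S1, u b < ∑ b ∈ S1 \ S0, u b := by
    have e0 : ∑ b ∈ S0 ∩ S1, u b + ∑ b ∈ S0 \ S1, u b = ∑ b ∈ S0, u b :=
      Finset.sum_inter_add_sum_sdiff S0 S1 u
    have e1 : ∑ b ∈ S1 ∩ S0, u b + ∑ b ∈ S1 \ S0, u b = ∑ b ∈ S1, u b :=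
      Finset.sum_inter_add_sum_sdiff S1 S0 u
    rw [Finset.inter_comm] at e1
    have hv0 : ∑ b ∈ S0, u b = val18 n u M i0 := rfl
    have hv1 : ∑ b ∈ S1, u b = val18 n u M i' := rfl
    linarith
  obtain ⟨j, hjA, j', hj'B, huj⟩ := aux18_swap_pair _ _ u hdiffcard hdiffsum
  have hjS0 : j ∈ S0 := (Finset.mem_sdiff.mp hjA).1
  have hjnS1 : j ∉ S1 := (Finset.mem_sdiff.mp hjA).2
  have hj'S1 : j' ∈ S1 := (Finset.mem_sdiff.mp hj'B).1
  have hj'nS0 : j' ∉ S0 := (Finset.mem_sdiff.mp hj'B).2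
  have hjn : j < n := Finset.mem_range.mp (Finset.mem_filter.mp hjS0).1
  have hj'n : j' < n := Finset.mem_range.mp (Finset.mem_filter.mp hj'S1).1
  have hMj0 : M i0 j = true := by simpa using (Finset.mem_filter.mp hjS0).2
  have hMj'1 : M i' j' = true := by simpa using (Finset.mem_filter.mp hj'S1).2
  have hMj1 : M i' j = false := by
    by_contra h
    exact hjnS1 (Finset.mem_filter.mpr ⟨Finset.mem_range.mpr hjn, by simpa using h⟩)
  have hMj'0 : M i0 j' = false := by
    by_contra h
    exact hj'nS0 (Finset.mem_filter.mpr ⟨Finset.mem_range.mpr hj'n, by simpa using h⟩)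
  have hjj' : j ≠ j' := fun h => hjnS1 (h ▸ hj'S1)
  -- the swapped matching
  set M' : ℕ → ℕ → Bool := fun a b =>
    if a = i0 then (if b = j then false else if b = j' then true else M a b)
    else if a = i' then (if b = j' then false else if b = j then true else M a b)
    else M a b with hM'def
  -- row filters
  have hrow0 : (Finset.range n).filter (fun b => M' i0 b) = insert j' (S0.erase j) := by
    ext b
    simp only [hM'def, Finset.mem_filter, Finset.mem_insert, Finset.mem_erase, hS0,
      Finset.mem_range, if_pos rfl]
    by_cases hb1 : b = j
    · subst hb1; simp [hjj', hjn]
    · by_cases hb2 : b = j'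
      · subst hb2; simp [hj'n, hb1]
      · simp [hb1, hb2]
  have hrow1 : (Finset.range n).filter (fun b => M' i' b) = insert j (S1.erase j') := by
    ext b
    simp only [hM'def, Finset.mem_filter, Finset.mem_insert, Finset.mem_erase, hS1,
      Finset.mem_range, if_neg (Ne.symm hne), if_pos rfl]
    by_cases hb1 : b = j'
    · subst hb1; simp [hjj', hj'n, Ne.symm hjj']
    · by_cases hb2 : b = j
      · subst hb2; simp [hjn, hb1]
      · simp [hb1, hb2]
  have hrowo : ∀ a, a ≠ i0 → a ≠ i' →
      (Finset.range n).filter (fun b => M' a b) = (Finset.range n).filter (fun b => M a b) := by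
    intro a h0 h1
    apply Finset.filter_congr
    intro b _
    simp [hM'def, h0, h1]
  -- column filters
  have hcolo : ∀ b, b ≠ j → b ≠ j' →
      (Finset.range n).filter (fun a => M' a b) = (Finset.range n).filter (fun a => M a b) := by
    intro b h0 h1
    apply Finset.filter_congr
    intro a _
    by_cases ha0 : a = i0
    · subst ha0; simp [hM'def, h0, h1]
    · by_cases ha1 : a = i'
      · subst ha1; simp [hM'def, ha0, h0, h1]
      · simp [hM'def, ha0, ha1]
  have hcolj : (Finset.range n).filter (fun a => M' a j) =
      insert i' (((Finset.range n).filter (fun a => M a j)).erase i0) := by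
    ext a
    simp only [hM'def, Finset.mem_filter, Finset.mem_insert, Finset.mem_erase, Finset.mem_range]
    by_cases ha0 : a = i0
    · subst ha0; simp [hne, hMj0, hi0n]
    · by_cases ha1 : a = i'
      · subst ha1; simp [hjj', hi', ha0]
      · simp [ha0, ha1]
  have hcolj' : (Finset.range n).filter (fun a => M' a j') =
      insert i0 (((Finset.range n).filter (fun a => M a j')).erase i') := by
    ext a
    simp only [hM'def, Finset.mem_filter, Finset.mem_insert, Finset.mem_erase, Finset.mem_range]
    by_cases ha0 : a = i0
    · subst ha0; simp [hne, hjj', Ne.symm hjj', hMj'0, hi0n]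
    · by_cases ha1 : a = i'
      · subst ha1; simp [ha0, Ne.symm hne]
      · simp [ha0, ha1]
  -- membership facts for columns
  have hi0colj : i0 ∈ (Finset.range n).filter (fun a => M a j) :=
    Finset.mem_filter.mpr ⟨Finset.mem_range.mpr hi0n, by simp [hMj0]⟩
  have hi'ncolj : i' ∉ (Finset.range n).filter (fun a => M a j) := by
    intro h
    have := (Finset.mem_filter.mp h).2
    simp [hMj1] at this
  have hi'colj' : i' ∈ (Finset.range n).filter (fun a => M a j') :=
    Finset.mem_filter.mpr ⟨Finset.mem_range.mpr hi', by simp [hMj'1]⟩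
  have hi0ncolj' : i0 ∉ (Finset.range n).filter (fun a => M a j') := by
    intro h
    have := (Finset.mem_filter.mp h).2
    simp [hMj'0] at this
  -- M' is a complete matching
  have hM'comp : Comp18 n d M' := by
    constructor
    · intro a han
      by_cases ha0 : a = i0
      · subst ha0
        rw [hrow0, aux18_card_swap hjS0 hj'nS0, hcard0]
      · by_cases ha1 : a = i'
        · subst ha1
          rw [hrow1, aux18_card_swap hj'S1 hjnS1, hcard1]
        · rw [hrowo a ha0 ha1]; exact hM.1 a han
    · intro b hbn
      by_cases hb0 : b = j
      · subst hb0
        rw [hcolj, aux18_card_swap hi0colj hi'ncolj]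
        exact hM.2 b hbn
      · by_cases hb1 : b = j'
        · subst hb1
          rw [hcolj', aux18_card_swap hi'colj' hi0ncolj']
          exact hM.2 b hbn
        · rw [hcolo b hb0 hb1]; exact hM.2 b hbn
  -- values under M'
  have hval0 : val18 n u M' i0 = val18 n u M i0 - u j + u j' := by
    unfold val18
    rw [hrow0, aux18_sum_swap u hjS0 hj'nS0]
  have hval1 : val18 n u M' i' = val18 n u M i' - u j' + u j := by
    unfold val18
    rw [hrow1, aux18_sum_swap u hj'S1 hjnS1]
  have hvalo : ∀ a, a ≠ i0 → a ≠ i' → val18 n u M' a = val18 n u M a := by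
    intro a h0 h1
    unfold val18
    rw [hrowo a h0 h1]
  have hgt0 : MMS < val18 n u M' i0 := by rw [hval0, hI0]; linarith
  have hgt1 : MMS < val18 n u M' i' := by
    rw [hval1]
    have h1 := hviol0 j' hj'n hMj'1
    rw [hI0] at h1
    have h2 := hu j
    linarith
  have hall : ∀ a < n, MMS ≤ val18 n u M' a := by
    intro a han
    by_cases ha0 : a = i0
    · subst ha0; exact le_of_lt hgt0
    · by_cases ha1 : a = i'
      · subst ha1; exact le_of_lt hgt1
      · rw [hvalo a ha0 ha1]; exact hMmms a han
  -- contradiction with minimality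
  have hsub : {a | a < n ∧ val18 n u M' a = MMS} ⊂ {a | a < n ∧ val18 n u M a = MMS} := by
    constructor
    · intro a ha
      obtain ⟨han, hav⟩ := ha
      have ha0 : a ≠ i0 := by
        intro h; subst h; exact absurd hav hgt0.ne'
      have ha1 : a ≠ i' := by
        intro h; subst h; exact absurd hav hgt1.ne'
      exact ⟨han, by rw [← hvalo a ha0 ha1]; exact hav⟩
    · intro hsup
      have : i0 ∈ {a | a < n ∧ val18 n u M' a = MMS} := hsup ⟨hi0n, hI0⟩
      exact absurd this.2 hgt0.ne'
  have hfin : {a | a < n ∧ val18 n u M a = MMS}.Finite :=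
    Set.Finite.subset (Set.finite_Iio n) (fun a ha => ha.1)
  have hlt' := Set.ncard_lt_ncard hsub hfin
  have := hmin M' hM'comp hall
  omega
end

section
/- There exists an instance (n = 10 agents per side, common degree d = 3, left utilities: u^ℓ(0)=u^ℓ(1)=u^ℓ(2)=2 and u^ℓ(j)=1 for j ∈ {3,...,9}; right utilities: u^r(i)=1 for all i) in which every complete matching is DMMS, but some complete matching is not DEF1; specifically, any complete matching with M_0^ℓ = M_1^ℓ = M_2^ℓ = {0,1,2} is DMMS but violates EF1 over the left side. -/
/-- Left utility in the n = 10, d = 3 instance: u^ℓ(0) = u^ℓ(1) = u^ℓ(2) = 2 and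
u^ℓ(j) = 1 for j ∈ {3,…,9}.  (Right utility is constantly 1.) -/
def u19 (j : ℕ) : ℕ := if j < 3 then 2 else 1

/-- Complete matching for n = 10, d = 3. -/
def Comp19 (M : ℕ → ℕ → Bool) : Prop :=
  (∀ i < 10, ((Finset.range 10).filter (fun j => M i j)).card = 3) ∧
  (∀ j < 10, ((Finset.range 10).filter (fun i => M i j)).card = 3)

/-- The left bundle value of agent i. -/
def lval19 (M : ℕ → ℕ → Bool) (i : ℕ) : ℕ :=
  ∑ j ∈ (Finset.range 10).filter (fun j => M i j), u19 j

/-- A concrete complete matching: rows 0,1,2 take columns {0,1,2}, and the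
remaining 7×7 block is matched cyclically. -/
def Mw (i j : ℕ) : Bool := if i < 3 then decide (j < 3) else (3 ≤ j && (j + 7 - i) % 7 < 3)

lemma compMw : Comp19 Mw := by unfold Comp19 Mw; decide

lemma u19_pos (j : ℕ) : 1 ≤ u19 j := by unfold u19; split <;> omega

lemma lval_ge (M : ℕ → ℕ → Bool) (h : Comp19 M) : ∀ i < 10, 3 ≤ lval19 M i := by
  intro i hi
  have h3 := h.1 i hi
  calc (3 : ℕ) = ((Finset.range 10).filter (fun j => M i j)).card • 1 := by
        rw [h3, smul_eq_mul]
    _ ≤ ∑ j ∈ (Finset.range 10).filter (fun j => M i j), u19 j :=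
        Finset.card_nsmul_le_sum _ _ _ (fun j _ => u19_pos j)

lemma total19 (M : ℕ → ℕ → Bool) (h : Comp19 M) :
    ∑ i ∈ Finset.range 10, lval19 M i = 39 := by
  have e1 : ∑ i ∈ Finset.range 10, lval19 M i
      = ∑ i ∈ Finset.range 10, ∑ j ∈ Finset.range 10, if M i j then u19 j else 0 := by
    refine Finset.sum_congr rfl fun i _ => ?_
    exact Finset.sum_filter _ _
  rw [e1, Finset.sum_comm]
  have e2 : ∀ j ∈ Finset.range 10,
      (∑ i ∈ Finset.range 10, if M i j then u19 j else 0) = 3 * u19 j := by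
    intro j hj
    rw [← Finset.sum_filter, Finset.sum_const, h.2 j (Finset.mem_range.mp hj)]
    simp [mul_comm]
  rw [Finset.sum_congr rfl e2]
  decide

/-- In the instance with n = 10 agents per side, common degree d = 3, left utilities
u19 and right utilities constantly 1: MMS^ℓ = 3 and MMS^r = 3 (first two conjuncts);
every complete matching is DMMS (third conjunct); some complete matching has
M_0^ℓ = M_1^ℓ = M_2^ℓ = {0,1,2} (fourth conjunct); and any such complete matching
violates EF1 over the left side (fifth conjunct). -/
theorem stmt_19 :
    ((∃ M : ℕ → ℕ → Bool, Comp19 M ∧ ∀ i < 10, 3 ≤ lval19 M i) ∧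
      (∀ M : ℕ → ℕ → Bool, Comp19 M → ∃ i < 10, lval19 M i ≤ 3)) ∧
    ((∃ M : ℕ → ℕ → Bool, Comp19 M ∧
        ∀ j < 10, 3 ≤ ((Finset.range 10).filter (fun i => M i j)).card) ∧
      (∀ M : ℕ → ℕ → Bool, Comp19 M →
        ∃ j < 10, ((Finset.range 10).filter (fun i => M i j)).card ≤ 3)) ∧
    (∀ M : ℕ → ℕ → Bool, Comp19 M →
      (∀ i < 10, 3 ≤ lval19 M i) ∧
      (∀ j < 10, 3 ≤ ((Finset.range 10).filter (fun i => M i j)).card)) ∧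
    (∃ M : ℕ → ℕ → Bool, Comp19 M ∧
      ∀ i < 3, (Finset.range 10).filter (fun j => M i j) = ({0, 1, 2} : Finset ℕ)) ∧
    (∀ M : ℕ → ℕ → Bool, Comp19 M →
      (∀ i < 3, (Finset.range 10).filter (fun j => M i j) = ({0, 1, 2} : Finset ℕ)) →
      ¬ (∀ i < 10, ∀ i' < 10,
          lval19 M i' ≤ lval19 M i ∨
          ∃ j' < 10, M i' j' = true ∧ lval19 M i' ≤ lval19 M i + u19 j')) := by
  refine ⟨⟨⟨Mw, compMw, lval_ge Mw compMw⟩, ?mms⟩,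
    ⟨⟨Mw, compMw, fun j hj => (compMw.2 j hj).ge⟩,
      fun M hM => ⟨0, by norm_num, (hM.2 0 (by norm_num)).le⟩⟩,
    fun M hM => ⟨lval_ge M hM, fun j hj => (hM.2 j hj).ge⟩,
    ⟨Mw, compMw, by decide⟩, ?ef1⟩
  case mms =>
    intro M hM
    by_contra hc
    push_neg at hc
    have h40 : 40 ≤ ∑ i ∈ Finset.range 10, lval19 M i := by
      calc (40 : ℕ) = ∑ _i ∈ Finset.range 10, 4 := by simp
        _ ≤ _ := Finset.sum_le_sum (fun i hi => hc i (Finset.mem_range.mp hi))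
    have := total19 M hM
    omega
  case ef1 =>
    intro M hM hrows hEF
    -- columns 0,1,2 are exactly {0,1,2}
    have hcol : ∀ j < 3, (Finset.range 10).filter (fun i => M i j) = ({0, 1, 2} : Finset ℕ) := by
      intro j hj
      refine (Finset.eq_of_subset_of_card_le ?_ ?_).symm
      · intro i hi
        have hi3 : i < 3 := by
          simp only [Finset.mem_insert, Finset.mem_singleton] at hi; omega
        have hjm : j ∈ (Finset.range 10).filter (fun j' => M i j') := by
          rw [hrows i hi3]
          simp only [Finset.mem_insert, Finset.mem_singleton]; omega
        rw [Finset.mem_filter] at hjm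
        exact Finset.mem_filter.mpr ⟨by simp; omega, hjm.2⟩
      · rw [hM.2 j (by omega)]; decide
    -- row 3 avoids columns 0,1,2
    have hM3 : ∀ j < 3, M 3 j = false := by
      intro j hj
      cases hb : M 3 j with
      | false => rfl
      | true =>
        have : (3 : ℕ) ∈ (Finset.range 10).filter (fun i => M i j) :=
          Finset.mem_filter.mpr ⟨by simp, hb⟩
        rw [hcol j hj] at this
        simp only [Finset.mem_insert, Finset.mem_singleton] at this; omega
    have hlv3 : lval19 M 3 = 3 := by
      unfold lval19
      have e : ∀ j ∈ (Finset.range 10).filter (fun j => M 3 j), u19 j = 1 := by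
        intro j hjm
        rw [Finset.mem_filter] at hjm
        have : ¬ j < 3 := fun h => by have := hM3 j h; rw [hjm.2] at this; exact absurd this (by simp)
        unfold u19; rw [if_neg this]
      rw [Finset.sum_congr rfl e, Finset.sum_const, hM.1 3 (by norm_num)]; rfl
    have hlv0 : lval19 M 0 = 6 := by
      unfold lval19
      rw [hrows 0 (by norm_num)]
      decide
    rcases hEF 3 (by norm_num) 0 (by norm_num) with h | ⟨j', hj', hMj', hle⟩
    · omega
    · have hjm : j' ∈ (Finset.range 10).filter (fun j => M 0 j) :=
        Finset.mem_filter.mpr ⟨Finset.mem_range.mpr hj', hMj'⟩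
      rw [hrows 0 (by norm_num)] at hjm
      have hj3 : j' < 3 := by
        simp only [Finset.mem_insert, Finset.mem_singleton] at hjm; omega
      have : u19 j' = 2 := by unfold u19; rw [if_pos hj3]
      omega
end
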